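/- arXiv:2508.06712 — 4 statements merged into one kernel-verified Lean document; each statement's English description precedes it below -/
import Mathlib

section
/- Let J : ℤ_p → [0,∞) be radial and integrable, extended by zero outside ℤ_p. For an integer r ≤ 0, k ∈ {1,…,p−1}, and b ∈ ℚ_p/ℤ_p with bp^{-r} ∈ ℤ_p, define the wavelet Ψ_{rbk}(x) = p^{-r/2} χ_p(p^{-1}k(p^r x − b)) 1_{|p^r x − b|_p ≤ 1}. Then J ∗ Ψ_{rbk} − Ψ_{rbk} = (Ĵ(p^{1−r}) − 1) Ψ_{rbk}, i.e., Ψ_{rbk} is an eigenfunction of the operator 𝑱φ = J∗φ − φ with eigenvalue Ĵ(p^{1−r}) − 1. -/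
open MeasureTheory

/-- The Kozyrev wavelet
`Ψ_{rbk}(x) = p^{-r/2} χ_p(p^{-1}k(p^r x − b)) 1_{|p^r x − b|_p ≤ 1}` is an
eigenfunction of `𝑱φ = J∗φ − φ` with eigenvalue `Ĵ(p^{1−r}) − 1`, where `Ĵ` is
the (radial) Fourier transform of `J` evaluated at any point of norm `p^{1-r}`. -/
theorem wavelet_eigenfunction_of_convolution_operator
    (p : ℕ) [Fact p.Prime]
    [MeasurableSpace ℚ_[p]] [BorelSpace ℚ_[p]]
    (μ : Measure ℚ_[p]) [μ.IsAddHaarMeasure]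
    (hμ : μ {x : ℚ_[p] | ‖x‖ ≤ 1} = 1)
    (χ : AddChar ℚ_[p] ℂ)
    (hχ₁ : ∀ x : ℚ_[p], ‖x‖ ≤ 1 → χ x = 1)
    (hχ₂ : ∀ x : ℚ_[p], 1 < ‖x‖ → χ x ≠ 1)
    (J : ℚ_[p] → ℝ)
    (hJpos : ∀ x, 0 ≤ J x)
    (hJrad : ∀ x y : ℚ_[p], ‖x‖ = ‖y‖ → J x = J y)
    (hJsupp : ∀ x : ℚ_[p], 1 < ‖x‖ → J x = 0)
    (hJint : IntegrableOn J {x : ℚ_[p] | ‖x‖ ≤ 1} μ)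
    (r : ℤ) (hr : r ≤ 0)
    (k : ℕ) (hk₁ : 1 ≤ k) (hk₂ : k ≤ p - 1)
    (b : ℚ_[p]) (hb : ‖(p : ℚ_[p]) ^ (-r) * b‖ ≤ 1)
    -- the wavelet
    (Ψ : ℚ_[p] → ℂ)
    (hΨ : Ψ = fun x => (((p : ℝ) ^ (-(r : ℝ) / 2) : ℝ) : ℂ) *
        χ ((p : ℚ_[p])⁻¹ * (k : ℚ_[p]) * ((p : ℚ_[p]) ^ r * x - b)) *
        (if ‖(p : ℚ_[p]) ^ r * x - b‖ ≤ 1 then 1 else 0))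
    -- the value `Ĵ(p^{1-r})` of the radial Fourier transform of `J`
    (hatJ : ℂ)
    (hhatJ : hatJ = ∫ x in {x : ℚ_[p] | ‖x‖ ≤ 1},
        (J x : ℂ) * χ ((p : ℚ_[p]) ^ (r - 1) * x) ∂μ) :
    ∀ x : ℚ_[p], (∫ y, (J y : ℂ) * Ψ (x - y) ∂μ) - Ψ x = (hatJ - 1) * Ψ x := by
  -- basic facts about p
  have hp : p.Prime := Fact.out
  have hp1 : (1:ℝ) < (p:ℝ) := by exact_mod_cast hp.one_lt
  have hp0R : (0:ℝ) < (p:ℝ) := lt_trans one_pos hp1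
  have hpQ : (p : ℚ_[p]) ≠ 0 := by
    exact_mod_cast (Nat.cast_ne_zero (R := ℚ_[p])).mpr hp.ne_zero
  -- continuity of χ
  have hχcont : Continuous (⇑χ) := by
    rw [continuous_iff_continuousAt]
    intro x
    have h : ∀ y ∈ Metric.ball x 1, χ y = χ x := by
      intro y hy
      have h1 : ‖y - x‖ ≤ 1 := le_of_lt (by simpa [dist_eq_norm] using hy)
      have h2 : χ (x + (y - x)) = χ x * χ (y - x) := χ.map_add_eq_mul x (y - x)
      rw [add_sub_cancel, hχ₁ _ h1, mul_one] at h2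
      exact h2
    exact ContinuousAt.congr continuousAt_const
      (Filter.eventuallyEq_of_mem (Metric.ball_mem_nhds x one_pos) h).symm
  -- χ takes values of norm 1
  have hχnorm : ∀ w : ℚ_[p], ‖χ w‖ = 1 := by
    intro w
    obtain ⟨n, hn⟩ := pow_unbounded_of_one_lt ‖w‖ hp1
    have hle : ‖((p ^ n : ℕ) : ℚ_[p]) * w‖ ≤ 1 := by
      push_cast
      rw [norm_mul, ← zpow_natCast (p : ℚ_[p]), Padic.norm_p_zpow]
      have h2 : (p:ℝ) ^ (-(n:ℤ)) * (p:ℝ) ^ (n:ℤ) = 1 := by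
        rw [← zpow_add₀ (ne_of_gt hp0R)]; simp
      have h3 : (0:ℝ) < (p:ℝ) ^ (-(n:ℤ)) := zpow_pos hp0R _
      have hn' : ‖w‖ ≤ (p:ℝ) ^ (n:ℤ) := by rw [zpow_natCast]; exact hn.le
      nlinarith [norm_nonneg w]
    have h1 : χ w ^ (p ^ n) = 1 := by
      rw [← χ.map_nsmul_eq_pow]
      rw [nsmul_eq_mul]
      exact hχ₁ _ hle
    have h2 : ‖χ w‖ ^ (p ^ n) = 1 := by rw [← norm_pow, h1, norm_one]
    have hpn : p ^ n ≠ 0 := pow_ne_zero n hp.ne_zero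
    rcases lt_trichotomy ‖χ w‖ 1 with h | h | h
    · have := pow_lt_one₀ (norm_nonneg _) h hpn; linarith
    · exact h
    · have := one_lt_pow₀ h hpn; linarith
  -- ultrametric helper
  have hadd : ∀ w z : ℚ_[p], ‖z‖ < ‖w‖ → ‖w + z‖ = ‖w‖ := by
    intro w z h
    rw [Padic.add_eq_max_of_ne h.ne']
    exact max_eq_left h.le
  have htri : ∀ w z : ℚ_[p], ‖w - z‖ ≤ max ‖w‖ ‖z‖ := by
    intro w z
    have := Padic.nonarchimedean w (-z)
    simpa [sub_eq_add_neg] using this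
  intro x
  -- abbreviations
  set B1 : Set ℚ_[p] := {y : ℚ_[p] | ‖y‖ ≤ 1} with hB1
  set θ : ℚ_[p] := (p : ℚ_[p]) ^ (r - 1) with hθdef
  set K : ℚ_[p] := (k : ℚ_[p]) with hKdef
  set v : ℚ_[p] := (p : ℚ_[p]) ^ r * x - b with hvdef
  set θ₂ : ℚ_[p] := -(θ * K) with hθ₂def
  set C : ℂ := (((p : ℝ) ^ (-(r : ℝ) / 2) : ℝ) : ℂ) with hCdef
  set a : ℚ_[p] := (p : ℚ_[p])⁻¹ * K * v with hadef
  set α : ℂ := C * χ a with hαdef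
  set z₀ : ℚ_[p] := (p : ℚ_[p]) ^ (-r) with hz₀def
  set Br : Set ℚ_[p] := {y : ℚ_[p] | ‖y‖ ≤ (p:ℝ) ^ r} with hBrdef
  set Br1 : Set ℚ_[p] := {y : ℚ_[p] | ‖y‖ ≤ (p:ℝ) ^ (r - 1)} with hBr1def
  -- norms
  have hKnorm : ‖K‖ = 1 := by
    have hle : ‖K‖ ≤ 1 := by
      have := Padic.norm_int_le_one (p := p) (k : ℤ)
      rw [hKdef]; exact_mod_cast this
    have hklt : k < p := by omega
    have hndvd : ¬ ((p:ℤ) ∣ (k:ℤ)) := by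
      intro hdvd
      have hkpos : (0:ℤ) < (k:ℤ) := by exact_mod_cast hk₁
      have := Int.le_of_dvd hkpos hdvd
      omega
    have hnlt : ¬ ‖((k:ℤ) : ℚ_[p])‖ < 1 := fun h =>
      hndvd ((Padic.norm_intCast_lt_one_iff (k := (k:ℤ))).mp h)
    have : ¬ ‖K‖ < 1 := by rw [hKdef]; exact_mod_cast hnlt
    exact le_antisymm hle (not_lt.mp this)
  have hθnorm : ‖θ‖ = (p:ℝ) ^ (1 - r) := by
    rw [hθdef, Padic.norm_p_zpow]; congr 1; ring
  have hθ₂norm : ‖θ₂‖ = (p:ℝ) ^ (1 - r) := by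
    rw [hθ₂def, norm_neg, norm_mul, hKnorm, mul_one, hθnorm]
  have hz₀norm : ‖z₀‖ = (p:ℝ) ^ r := by
    rw [hz₀def, Padic.norm_p_zpow, neg_neg]
  -- simple real-power facts
  have hprpos : (0:ℝ) < (p:ℝ) ^ r := zpow_pos hp0R r
  have hpr1pos : (0:ℝ) < (p:ℝ) ^ (r - 1) := zpow_pos hp0R _
  have hprle1 : (p:ℝ) ^ r ≤ 1 := zpow_le_one_of_nonpos₀ hp1.le hr
  have hpr1lt : (p:ℝ) ^ (r - 1) < (p:ℝ) ^ r :=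
    (zpow_lt_zpow_iff_right₀ hp1).mpr (by omega)
  have hcancel : (p:ℝ) ^ (-r) * (p:ℝ) ^ r = 1 := by
    rw [← zpow_add₀ (ne_of_gt hp0R)]; simp
  have hcancel2 : (p:ℝ) ^ (1 - r) * (p:ℝ) ^ r = (p:ℝ) := by
    rw [← zpow_add₀ (ne_of_gt hp0R)]; norm_num
  have hcancel3 : (p:ℝ) ^ (1 - r) * (p:ℝ) ^ (r - 1) = 1 := by
    rw [← zpow_add₀ (ne_of_gt hp0R)]; norm_num
  -- the crucial character value
  have hγ2 : ∀ θ' : ℚ_[p], ‖θ'‖ = (p:ℝ) ^ (1 - r) → χ (θ' * z₀) ≠ 1 := by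
    intro θ' hθ'
    apply hχ₂
    rw [norm_mul, hθ', hz₀norm, hcancel2]
    exact hp1
  -- measurability of balls
  have mball : ∀ c : ℝ, MeasurableSet {y : ℚ_[p] | ‖y‖ ≤ c} :=
    fun c => (isClosed_le continuous_norm continuous_const).measurableSet
  have hBrsub : Br ⊆ B1 := fun y hy => le_trans hy hprle1
  have hBr1sub : Br1 ⊆ Br := fun y hy => le_trans hy hpr1lt.le
  have hBrfin : μ Br < ⊤ := by
    calc μ Br ≤ μ B1 := measure_mono hBrsub
    _ = 1 := hμ
    _ < ⊤ := ENNReal.one_lt_top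
  -- scaling of norms
  have hscale : ∀ y : ℚ_[p], ‖(p : ℚ_[p]) ^ r * y‖ = (p:ℝ) ^ (-r) * ‖y‖ := by
    intro y
    rw [norm_mul, Padic.norm_p_zpow]
  -- AESM facts
  have hJaesm : AEStronglyMeasurable J μ := by
    have hfun : J = Set.indicator B1 J := by
      funext y
      by_cases h : y ∈ B1
      · rw [Set.indicator_of_mem h]
      · rw [Set.indicator_of_notMem h]
        exact hJsupp y (not_le.mp h)
    rw [hfun]
    exact (aestronglyMeasurable_indicator_iff (mball 1)).mpr hJint.aestronglyMeasurable
  have hJCaesm : AEStronglyMeasurable (fun y => (J y : ℂ)) μ :=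
    Complex.continuous_ofReal.comp_aestronglyMeasurable hJaesm
  -- integrability
  have hInt : ∀ θ' : ℚ_[p], IntegrableOn (fun y => (J y : ℂ) * χ (θ' * y)) B1 μ := by
    intro θ'
    refine Integrable.mono' hJint ?_ ?_
    · exact (hJCaesm.mul ((hχcont.comp (continuous_const.mul continuous_id)).aestronglyMeasurable)).restrict
    · refine Filter.Eventually.of_forall fun y => ?_
      rw [norm_mul, hχnorm, mul_one, Complex.norm_real, Real.norm_eq_abs,
        abs_of_nonneg (hJpos y)]
  have hIntχ : ∀ θ' : ℚ_[p], IntegrableOn (fun y => χ (θ' * y)) Br μ := by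
    intro θ'
    refine Integrable.mono' (g := fun _ => (1:ℝ)) ?_ ?_ ?_
    · exact integrableOn_const hBrfin.ne
    · exact ((hχcont.comp (continuous_const.mul continuous_id)).aestronglyMeasurable).restrict
    · exact Filter.Eventually.of_forall fun y => le_of_eq (hχnorm _)
  -- the key translation-invariance vanishing lemma
  have key_vanish : ∀ (s : Set ℚ_[p]), MeasurableSet s → ∀ (f : ℚ_[p] → ℂ),
      ∀ z : ℚ_[p], (∀ y, y + z ∈ s ↔ y ∈ s) →
      ∀ γ : ℂ, γ ≠ 1 → (∀ y ∈ s, f (y + z) = γ * f y) →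
      ∫ y in s, f y ∂μ = 0 := by
    intro s hs f z hinv γ hγ hshift
    have hpre : (fun y => y + z) ⁻¹' s = s := Set.ext fun y => hinv y
    have h1 : ∫ y in s, f (y + z) ∂μ = ∫ y in s, f y ∂μ := by
      have := (measurePreserving_add_right μ z).setIntegral_preimage_emb
        (MeasurableEquiv.addRight z).measurableEmbedding f s
      rwa [hpre] at this
    have h2 : ∫ y in s, f (y + z) ∂μ = γ * ∫ y in s, f y ∂μ := by
      rw [← integral_const_mul]
      exact setIntegral_congr_fun hs fun y hy => hshift y hy
    have h3 : (γ - 1) * ∫ y in s, f y ∂μ = 0 := by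
      rw [sub_mul, one_mul, ← h2, h1, sub_self]
    rcases mul_eq_zero.mp h3 with h | h
    · exact absurd (sub_eq_zero.mp h) hγ
    · exact h
  
  have mB1 : MeasurableSet B1 := mball 1
  have mBr : MeasurableSet Br := mball _
  have mBr1' : MeasurableSet Br1 := mball _
  -- step 1: reduce the integral over B1 to Br
  have step1 : ∀ θ' : ℚ_[p], ‖θ'‖ = (p:ℝ) ^ (1 - r) →
      (∫ y in B1, (J y : ℂ) * χ (θ' * y) ∂μ) = ∫ y in Br, (J y : ℂ) * χ (θ' * y) ∂μ := by
    intro θ' hθ'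
    have hdiff := integral_diff mBr (hInt θ') hBrsub
    have hzero : ∫ y in B1 \ Br, (J y : ℂ) * χ (θ' * y) ∂μ = 0 := by
      have hnp : ∀ y : ℚ_[p], ¬ ‖y‖ ≤ (p:ℝ)^r → ‖y + z₀‖ = ‖y‖ := by
        intro y hy
        exact hadd y z₀ (by rw [hz₀norm]; exact not_le.mp hy)
      have hinv : ∀ y, y + z₀ ∈ B1 \ Br ↔ y ∈ B1 \ Br := by
        intro y
        constructor
        · rintro ⟨h1, h2⟩
          have heq : ‖(y + z₀) + (-z₀)‖ = ‖y + z₀‖ := by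
            apply hadd
            rw [norm_neg, hz₀norm]
            exact not_le.mp h2
          simp only [add_neg_cancel_right] at heq
          refine ⟨?_, ?_⟩
          · show ‖y‖ ≤ 1; rw [heq]; exact h1
          · show ¬ ‖y‖ ≤ (p:ℝ)^r; rw [heq]; exact h2
        · rintro ⟨h1, h2⟩
          have heq : ‖y + z₀‖ = ‖y‖ := hnp y h2
          refine ⟨?_, ?_⟩
          · show ‖y + z₀‖ ≤ 1; rw [heq]; exact h1
          · show ¬ ‖y + z₀‖ ≤ (p:ℝ)^r; rw [heq]; exact h2
      refine key_vanish _ (mB1.diff mBr) _ z₀ hinv (χ (θ' * z₀)) (hγ2 θ' hθ') ?_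
      intro y hy
      have heq : ‖y + z₀‖ = ‖y‖ := hnp y hy.2
      rw [hJrad (y + z₀) y heq, mul_add, χ.map_add_eq_mul]
      ring
    rw [hzero] at hdiff
    exact sub_eq_zero.mp hdiff.symm
  -- step 2: the integral over Br is independent of θ' of norm p^(1-r)
  have step2 : ∀ θ' : ℚ_[p], ‖θ'‖ = (p:ℝ) ^ (1 - r) →
      (∫ y in Br, (J y : ℂ) * χ (θ' * y) ∂μ)
        = (∫ y in Br1, (J y : ℂ) ∂μ) - (J z₀ : ℂ) * ((μ Br1).toReal : ℂ) := by
    intro θ' hθ'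
    have hIntBr : IntegrableOn (fun y => (J y : ℂ) * χ (θ' * y)) Br μ :=
      (hInt θ').mono_set hBrsub
    have hdiff2 := integral_diff mBr1' hIntBr hBr1sub
    have hb1 : (∫ y in Br1, (J y : ℂ) * χ (θ' * y) ∂μ) = ∫ y in Br1, (J y : ℂ) ∂μ := by
      refine setIntegral_congr_fun mBr1' fun y hy => ?_
      have hy' : ‖y‖ ≤ (p:ℝ)^(r-1) := hy
      have hn : ‖θ' * y‖ ≤ 1 := by
        rw [norm_mul, hθ']
        calc (p:ℝ)^(1-r) * ‖y‖ ≤ (p:ℝ)^(1-r) * (p:ℝ)^(r-1) :=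
              mul_le_mul_of_nonneg_left hy' (le_of_lt (zpow_pos hp0R _))
        _ = 1 := hcancel3
      rw [hχ₁ _ hn, mul_one]
    have hsph1 : (∫ y in Br \ Br1, (J y : ℂ) * χ (θ' * y) ∂μ)
        = (J z₀ : ℂ) * ∫ y in Br \ Br1, χ (θ' * y) ∂μ := by
      rw [← integral_const_mul]
      refine setIntegral_congr_fun (mBr.diff mBr1') fun y hy => ?_
      have h1' : ‖y‖ ≤ (p:ℝ)^r := hy.1
      have h2' : ¬ ‖y‖ ≤ (p:ℝ)^(r-1) := hy.2
      have hy0 : y ≠ 0 := by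
        intro h; rw [h, norm_zero] at h2'; exact h2' hpr1pos.le
      have hval := Padic.norm_eq_zpow_neg_valuation hy0
      have hle2 : -y.valuation ≤ r := by
        rw [hval] at h1'; exact (zpow_le_zpow_iff_right₀ hp1).mp h1'
      have hgt2 : r - 1 < -y.valuation := by
        rw [hval] at h2'; exact (zpow_lt_zpow_iff_right₀ hp1).mp (not_le.mp h2')
      have hvr : -y.valuation = r := by omega
      have hnormy : ‖y‖ = ‖z₀‖ := by rw [hval, hvr, hz₀norm]
      rw [hJrad y z₀ hnormy]
    have hχBr : (∫ y in Br, χ (θ' * y) ∂μ) = 0 := by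
      refine key_vanish Br mBr _ z₀ ?_ (χ (θ' * z₀)) (hγ2 θ' hθ') ?_
      · intro y
        constructor
        · intro h
          have h' : ‖y + z₀‖ ≤ (p:ℝ)^r := h
          show ‖y‖ ≤ (p:ℝ)^r
          have h2 := htri (y + z₀) z₀
          simp only [add_sub_cancel_right] at h2
          exact le_trans h2 (max_le h' (le_of_eq hz₀norm))
        · intro h
          have h' : ‖y‖ ≤ (p:ℝ)^r := h
          show ‖y + z₀‖ ≤ (p:ℝ)^r
          calc ‖y + z₀‖ ≤ max ‖y‖ ‖z₀‖ := Padic.nonarchimedean y z₀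
          _ ≤ (p:ℝ)^r := max_le h' (le_of_eq hz₀norm)
      · intro y _
        rw [mul_add, χ.map_add_eq_mul]
        ring
    have hχBr1 : (∫ y in Br1, χ (θ' * y) ∂μ) = ((μ Br1).toReal : ℂ) := by
      have hcongr : (∫ y in Br1, χ (θ' * y) ∂μ) = ∫ _y in Br1, (1:ℂ) ∂μ := by
        refine setIntegral_congr_fun mBr1' fun y hy => ?_
        have hy' : ‖y‖ ≤ (p:ℝ)^(r-1) := hy
        apply hχ₁
        rw [norm_mul, hθ']
        calc (p:ℝ)^(1-r) * ‖y‖ ≤ (p:ℝ)^(1-r) * (p:ℝ)^(r-1) :=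
              mul_le_mul_of_nonneg_left hy' (le_of_lt (zpow_pos hp0R _))
        _ = 1 := hcancel3
      rw [hcongr, setIntegral_const]
      simp [measureReal_def]
    have hχdiff := integral_diff mBr1' (hIntχ θ') hBr1sub
    rw [hχBr, hχBr1, zero_sub] at hχdiff
    rw [hsph1, hχdiff, hb1] at hdiff2
    linear_combination -hdiff2
  -- reduce the goal
  suffices hmain : (∫ y, (J y : ℂ) * Ψ (x - y) ∂μ) = hatJ * Ψ x by
    rw [hmain]; ring
  -- rewrite the integrand as an indicator function
  have hpr : (p : ℚ_[p]) ^ r = θ * (p : ℚ_[p]) := by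
    rw [hθdef, ← zpow_add_one₀ hpQ, sub_add_cancel]
  have harg : ∀ y : ℚ_[p],
      (p : ℚ_[p])⁻¹ * K * ((p : ℚ_[p]) ^ r * (x - y) - b) = a + θ₂ * y := by
    intro y
    rw [hadef, hvdef, hθ₂def, hpr]
    field_simp
    ring
  have hargnorm : ∀ y : ℚ_[p],
      (p : ℚ_[p]) ^ r * (x - y) - b = v - (p : ℚ_[p]) ^ r * y := by
    intro y; rw [hvdef]; ring
  set Sx : Set ℚ_[p] := {y : ℚ_[p] | ‖v - (p : ℚ_[p]) ^ r * y‖ ≤ 1} with hSxdef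
  have hSmeas : MeasurableSet Sx :=
    (isClosed_le ((continuous_const.sub (continuous_const.mul continuous_id)).norm)
      continuous_const).measurableSet
  have hGeq : (fun y => (J y : ℂ) * Ψ (x - y))
      = Set.indicator Sx (fun y => α * ((J y : ℂ) * χ (θ₂ * y))) := by
    funext y
    by_cases hy : y ∈ Sx
    · rw [Set.indicator_of_mem hy]
      simp only [hΨ]
      rw [harg y, hargnorm y, if_pos (show ‖v - (p:ℚ_[p]) ^ r * y‖ ≤ 1 from hy), χ.map_add_eq_mul, hαdef]
      ring
    · rw [Set.indicator_of_notMem hy]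
      simp only [hΨ]
      rw [hargnorm y, if_neg (show ¬ ‖v - (p:ℚ_[p]) ^ r * y‖ ≤ 1 from hy)]
      ring
  rw [hGeq, integral_indicator hSmeas]
  by_cases hcase : ‖v‖ ≤ 1
  · -- CASE A : x is in the support of the wavelet
    have hΨx : Ψ x = α := by
      simp only [hΨ]
      rw [← hvdef, if_pos hcase, ← hadef, hαdef, mul_one]
    have hSxBr : Sx = Br := by
      ext y
      simp only [hSxdef, hBrdef, Set.mem_setOf_eq]
      constructor
      · intro h
        have h1 : ‖(p:ℚ_[p])^r * y‖ ≤ 1 := by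
          have h2 := htri v (v - (p:ℚ_[p])^r * y)
          simp only [sub_sub_cancel] at h2
          exact le_trans h2 (max_le hcase h)
        rw [hscale y] at h1
        nlinarith [norm_nonneg y, mul_le_mul_of_nonneg_left h1 hprpos.le, hcancel]
      · intro h
        have h1 : ‖(p:ℚ_[p])^r * y‖ ≤ 1 := by
          rw [hscale y]
          nlinarith [mul_le_mul_of_nonneg_left h (le_of_lt (zpow_pos hp0R (-r))), hcancel]
        exact le_trans (htri v _) (max_le hcase h1)
    rw [hSxBr, integral_const_mul]
    have e1 := step1 θ hθnorm
    have e2 := step2 θ hθnorm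
    have e3 := step2 θ₂ hθ₂norm
    rw [hΨx, hhatJ, e1, e2, ← e3]
    ring
  · -- CASE B : x is outside the support of the wavelet
    have hΨx : Ψ x = 0 := by
      simp only [hΨ]
      rw [← hvdef, if_neg hcase, mul_zero]
    rw [hΨx, mul_zero]
    have hv1 : 1 < ‖v‖ := not_le.mp hcase
    have hnormS : ∀ y, y ∈ Sx → (p:ℝ)^(-r) * ‖y‖ = ‖v‖ := by
      intro y hy
      have hy' : ‖v - (p:ℚ_[p])^r * y‖ ≤ 1 := hy
      have hkey : ‖v + -(v - (p:ℚ_[p])^r * y)‖ = ‖v‖ := by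
        apply hadd
        rw [norm_neg]
        exact lt_of_le_of_lt hy' hv1
      rw [show v + -(v - (p:ℚ_[p])^r * y) = (p:ℚ_[p])^r * y from by ring] at hkey
      rw [← hscale y]
      exact hkey
    have hshift1 : ∀ w : ℚ_[p], ‖w - 1‖ ≤ 1 ↔ ‖w‖ ≤ 1 := by
      intro w
      constructor
      · intro h
        have h2 := htri (w - 1) (-1)
        rw [show (w - 1) - (-1) = w from by ring, norm_neg, norm_one] at h2
        exact le_trans h2 (max_le h le_rfl)
      · intro h
        have h2 := htri w 1
        rw [norm_one] at h2
        exact le_trans h2 (max_le h le_rfl)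
    have hprz : (p:ℚ_[p])^r * z₀ = 1 := by
      rw [hz₀def, ← zpow_add₀ hpQ]; simp
    have hSshift : ∀ y, y + z₀ ∈ Sx ↔ y ∈ Sx := by
      intro y
      have hrew : v - (p:ℚ_[p])^r * (y + z₀) = (v - (p:ℚ_[p])^r * y) - 1 := by
        rw [mul_add, hprz]; ring
      constructor
      · intro h
        have h' : ‖(v - (p:ℚ_[p])^r * y) - 1‖ ≤ 1 := by rw [← hrew]; exact h
        show ‖v - (p:ℚ_[p])^r * y‖ ≤ 1
        exact (hshift1 _).mp h'
      · intro h
        have h' : ‖v - (p:ℚ_[p])^r * y‖ ≤ 1 := h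
        show ‖v - (p:ℚ_[p])^r * (y + z₀)‖ ≤ 1
        rw [hrew]
        exact (hshift1 _).mpr h'
    refine key_vanish Sx hSmeas _ z₀ hSshift (χ (θ₂ * z₀)) (hγ2 θ₂ hθ₂norm) ?_
    intro y hy
    have hy2 : y + z₀ ∈ Sx := (hSshift y).mpr hy
    have hn1 := hnormS y hy
    have hn2 := hnormS (y + z₀) hy2
    have hppos : (0:ℝ) < (p:ℝ)^(-r) := zpow_pos hp0R _
    have hnorm_eq : ‖y + z₀‖ = ‖y‖ :=
      mul_left_cancel₀ (ne_of_gt hppos) (hn2.trans hn1.symm)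
    rw [hJrad (y + z₀) y hnorm_eq, mul_add, χ.map_add_eq_mul]
    ring
end

section
/- The Fourier transform of the wavelet Ψ_{rbk}(x) = p^{-r/2} χ_p(p^{-1}k(p^r x − b)) 1_{|p^r x − b|_p ≤ 1} is Ψ̂_{rbk}(ξ) = p^{r/2} χ_p(p^{-r} b ξ) 1_{|p^{-r} ξ + p^{-1} k|_p ≤ 1}, and every ξ in the support of Ψ̂_{rbk} satisfies |ξ|_p = p^{1−r}. -/
open MeasureTheory

lemma res_dec (p : ℕ) [hp : Fact p.Prime] (z : ℚ_[p]) (hz : ‖z‖ ≤ 1) :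
    ∃ j : ℕ, j < p ∧ ‖z - (j : ℚ_[p])‖ ≤ (p : ℝ)⁻¹ := by
  set w : ℤ_[p] := ⟨z, hz⟩ with hw
  refine ⟨(PadicInt.toZMod w).val, ZMod.val_lt _, ?_⟩
  have h := PadicInt.toZMod_spec w
  rw [PadicInt.maximalIdeal_eq_span_p, Ideal.mem_span_singleton] at h
  obtain ⟨y, hy⟩ := h
  have : z - ((PadicInt.toZMod w).val : ℚ_[p]) = ((w - (ZMod.cast (PadicInt.toZMod w) : ℤ_[p]) : ℤ_[p]) : ℚ_[p]) := by
    rw [PadicInt.coe_sub]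
    congr 1
    rw [← ZMod.natCast_val]
    push_cast
    rfl
  rw [this, hy]
  push_cast
  rw [norm_mul, Padic.norm_p]
  calc (p:ℝ)⁻¹ * ‖(y : ℚ_[p])‖ ≤ (p:ℝ)⁻¹ * 1 := by
        gcongr; exact y.norm_le_one
    _ = (p:ℝ)⁻¹ := mul_one _

lemma ball_meas (p : ℕ) [hp : Fact p.Prime]
    [MeasurableSpace ℚ_[p]] [BorelSpace ℚ_[p]]
    (μ : Measure ℚ_[p]) [μ.IsAddHaarMeasure]
    (hμ : μ {x : ℚ_[p] | ‖x‖ ≤ 1} = 1) (n : ℤ) :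
    μ {x : ℚ_[p] | ‖x‖ ≤ (p : ℝ) ^ n} = (p : ENNReal) ^ n := by
  have hp1 : (1:ℝ) < p := by exact_mod_cast hp.out.one_lt
  have hp0 : (0:ℝ) < p := by positivity
  have hpq : (p:ℚ_[p]) ≠ 0 := by exact_mod_cast hp.out.ne_zero
  have hpe0 : (p:ENNReal) ≠ 0 := by exact_mod_cast hp.out.ne_zero
  have hpet : (p:ENNReal) ≠ ⊤ := ENNReal.natCast_ne_top p
  have hmeas : ∀ ρ : ℝ, MeasurableSet {x : ℚ_[p] | ‖x‖ ≤ ρ} := by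
    intro ρ
    have : {x : ℚ_[p] | ‖x‖ ≤ ρ} = Metric.closedBall 0 ρ := by
      ext x; simp [Metric.mem_closedBall, dist_zero_right]
    rw [this]; exact measurableSet_closedBall
  have step : ∀ m : ℤ, μ {x : ℚ_[p] | ‖x‖ ≤ (p : ℝ) ^ (m+1)} =
      (p : ENNReal) * μ {x : ℚ_[p] | ‖x‖ ≤ (p : ℝ) ^ m} := by
    intro m
    set C : ℕ → Set ℚ_[p] := fun j =>
      (fun x => x - (j : ℚ_[p]) * (p : ℚ_[p]) ^ (-(m+1))) ⁻¹' {x : ℚ_[p] | ‖x‖ ≤ (p : ℝ) ^ m}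
      with hC
    have hnormp : ∀ s : ℤ, ‖(p:ℚ_[p]) ^ s‖ = (p:ℝ) ^ (-s) := fun s => by
      rw [Padic.norm_p_zpow]
    have hpc : (p:ℚ_[p]) ^ (-(m+1)) * (p:ℚ_[p]) ^ (m+1) = 1 := by
      rw [← zpow_add₀ hpq, show (-(m+1) + (m+1) : ℤ) = 0 by ring, zpow_zero]
    have hcover : {x : ℚ_[p] | ‖x‖ ≤ (p : ℝ) ^ (m+1)} = ⋃ j ∈ Finset.range p, C j := by
      ext x
      simp only [Set.mem_setOf_eq, Set.mem_iUnion, Finset.mem_range, hC, Set.mem_preimage]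
      constructor
      · intro hx
        have hz : ‖(p:ℚ_[p]) ^ (m+1) * x‖ ≤ 1 := by
          rw [norm_mul, hnormp]
          calc (p:ℝ) ^ (-(m+1)) * ‖x‖ ≤ (p:ℝ) ^ (-(m+1)) * (p:ℝ) ^ (m+1) := by
                gcongr
            _ = 1 := by
                rw [← zpow_add₀ (ne_of_gt hp0), show (-(m+1) + (m+1) : ℤ) = 0 by ring, zpow_zero]
        obtain ⟨j, hj, hjn⟩ := res_dec p _ hz
        refine ⟨j, hj, ?_⟩
        have key : x - (j:ℚ_[p]) * (p:ℚ_[p]) ^ (-(m+1)) =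
            (p:ℚ_[p]) ^ (-(m+1)) * ((p:ℚ_[p]) ^ (m+1) * x - (j:ℚ_[p])) := by
          rw [mul_sub, ← mul_assoc, hpc, one_mul, mul_comm ((j:ℚ_[p]))]
        rw [key, norm_mul, hnormp, neg_neg]
        calc (p:ℝ) ^ (m+1) * ‖(p:ℚ_[p]) ^ (m+1) * x - (j:ℚ_[p])‖
            ≤ (p:ℝ) ^ (m+1) * (p:ℝ)⁻¹ := by gcongr
          _ = (p:ℝ) ^ m := by
              rw [← zpow_neg_one, ← zpow_add₀ (ne_of_gt hp0), add_neg_cancel_right]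
      · rintro ⟨j, hj, hjx⟩
        have h1 : ‖(j : ℚ_[p]) * (p:ℚ_[p]) ^ (-(m+1))‖ ≤ (p:ℝ) ^ (m+1) := by
          rw [norm_mul, hnormp, neg_neg]
          calc ‖((j:ℕ) : ℚ_[p])‖ * (p:ℝ) ^ (m+1) ≤ 1 * (p:ℝ) ^ (m+1) := by
                gcongr
                have := Padic.norm_int_le_one (p := p) (j : ℤ)
                push_cast at this; exact this
            _ = (p:ℝ) ^ (m+1) := one_mul _
        calc ‖x‖ = ‖(x - (j:ℚ_[p]) * (p:ℚ_[p]) ^ (-(m+1))) + (j:ℚ_[p]) * (p:ℚ_[p]) ^ (-(m+1))‖ := by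
              ring_nf
          _ ≤ max ‖x - (j:ℚ_[p]) * (p:ℚ_[p]) ^ (-(m+1))‖ ‖(j:ℚ_[p]) * (p:ℚ_[p]) ^ (-(m+1))‖ :=
              Padic.nonarchimedean _ _
          _ ≤ (p:ℝ) ^ (m+1) := by
              apply max_le _ h1
              refine le_trans hjx ?_
              gcongr
              · exact le_of_lt hp1
              · omega
    have hdisj : (↑(Finset.range p) : Set ℕ).PairwiseDisjoint C := by
      intro j hj j' hj' hne
      simp only [Finset.coe_range, Set.mem_Iio] at hj hj'
      rw [Function.onFun, Set.disjoint_left]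
      intro x hx hx'
      simp only [hC, Set.mem_preimage, Set.mem_setOf_eq] at hx hx'
      apply hne
      have hsub : ‖((j:ℚ_[p]) - (j':ℚ_[p])) * (p:ℚ_[p]) ^ (-(m+1))‖ ≤ (p:ℝ) ^ m := by
        have key : ((j:ℚ_[p]) - (j':ℚ_[p])) * (p:ℚ_[p]) ^ (-(m+1)) =
            (x - (j':ℚ_[p]) * (p:ℚ_[p]) ^ (-(m+1))) - (x - (j:ℚ_[p]) * (p:ℚ_[p]) ^ (-(m+1))) := by
          ring
        rw [key, sub_eq_add_neg]
        refine le_trans (Padic.nonarchimedean _ _) ?_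
        rw [norm_neg]
        exact max_le hx' hx
      rw [norm_mul, hnormp, neg_neg] at hsub
      have h3 : ‖(j:ℚ_[p]) - (j':ℚ_[p])‖ ≤ (p:ℝ)^m / (p:ℝ)^(m+1) :=
        (le_div_iff₀ (zpow_pos hp0 _)).mpr hsub
      rw [← zpow_sub₀ (ne_of_gt hp0), show (m : ℤ) - (m+1) = -1 by ring, zpow_neg_one] at h3
      set d : ℤ := (j:ℤ) - (j':ℤ) with hd
      have hlt : ‖(d : ℚ_[p])‖ < 1 := by
        rw [hd]
        push_cast
        exact lt_of_le_of_lt h3 (by rw [inv_lt_one₀ hp0]; exact hp1)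
      rw [Padic.norm_intCast_lt_one_iff] at hlt
      have := Int.eq_zero_of_abs_lt_dvd hlt (by rw [hd, abs_sub_lt_iff]; constructor <;> omega)
      rw [hd] at this
      omega
    have hCmeas : ∀ j ∈ Finset.range p, MeasurableSet (C j) := fun j _ =>
      (hmeas _).preimage (measurable_id.sub_const _)
    have hCμ : ∀ j, μ (C j) = μ {x : ℚ_[p] | ‖x‖ ≤ (p : ℝ) ^ m} := by
      intro j
      have : C j = (· + (-(((j:ℚ_[p]) * (p:ℚ_[p]) ^ (-(m+1)))))) ⁻¹' {x : ℚ_[p] | ‖x‖ ≤ (p : ℝ) ^ m} := by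
        simp [hC, sub_eq_add_neg]
      rw [this, measure_preimage_add_right]
    rw [hcover, measure_biUnion_finset hdisj hCmeas]
    simp only [hCμ, Finset.sum_const, Finset.card_range, nsmul_eq_mul]
  refine Int.induction_on n ?_ ?_ ?_
  · simpa using hμ
  · intro i ih
    rw [step i, ih, ENNReal.zpow_add hpe0 hpet, zpow_one, mul_comm]
  · intro i ih
    have h := step (-i - 1)
    rw [show (-i - 1 + 1 : ℤ) = -i by ring, ih] at h
    have h2 : (p:ENNReal) * (p:ENNReal) ^ (-(i:ℤ) - 1) = (p:ENNReal) ^ (-(i:ℤ)) := by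
      conv_rhs => rw [show (-(i:ℤ)) = 1 + (-(i:ℤ) - 1) by ring]
      rw [ENNReal.zpow_add hpe0 hpet, zpow_one]
    have h3 : (p:ENNReal) * μ {x : ℚ_[p] | ‖x‖ ≤ (p:ℝ) ^ (-(i:ℤ)-1)} =
        (p:ENNReal) * (p:ENNReal) ^ (-(i:ℤ)-1) := by rw [← h, h2]
    exact (ENNReal.mul_right_strictMono hpe0 hpet).injective h3

lemma toReal_zpow' (a : ENNReal) (n : ℤ) : (a ^ n).toReal = a.toReal ^ n := by
  cases n with
  | ofNat k => simp [ENNReal.toReal_pow]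
  | negSucc k => simp [zpow_negSucc, ENNReal.toReal_inv, ENNReal.toReal_pow]

lemma chi_cont (p : ℕ) [hp : Fact p.Prime] (χ : AddChar ℚ_[p] ℂ)
    (hχ₁ : ∀ x : ℚ_[p], ‖x‖ ≤ 1 → χ x = 1) : Continuous χ := by
  rw [continuous_iff_continuousAt]
  intro x
  apply Filter.EventuallyEq.continuousAt (y := χ x)
  filter_upwards [Metric.closedBall_mem_nhds x one_pos] with y hy
  have : y = x + (y - x) := by ring
  rw [this, AddChar.map_add_eq_mul, hχ₁ (y - x) (by
    simpa [dist_eq_norm] using hy), mul_one]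

lemma char_ball_int (p : ℕ) [hp : Fact p.Prime]
    [MeasurableSpace ℚ_[p]] [BorelSpace ℚ_[p]]
    (μ : Measure ℚ_[p]) [μ.IsAddHaarMeasure]
    (hμ : μ {x : ℚ_[p] | ‖x‖ ≤ 1} = 1)
    (χ : AddChar ℚ_[p] ℂ)
    (hχ₁ : ∀ x : ℚ_[p], ‖x‖ ≤ 1 → χ x = 1)
    (hχ₂ : ∀ x : ℚ_[p], 1 < ‖x‖ → χ x ≠ 1)
    (η : ℚ_[p]) (n : ℤ) :
    ∫ x, Set.indicator {x : ℚ_[p] | ‖x‖ ≤ (p:ℝ)^n} (fun x => χ (η * x)) x ∂μ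
      = if ‖η‖ ≤ (p:ℝ)^(-n) then (((p:ℝ)^n : ℝ) : ℂ) else 0 := by
  have hp1 : (1:ℝ) < p := by exact_mod_cast hp.out.one_lt
  have hp0 : (0:ℝ) < p := by positivity
  have hBmeas : MeasurableSet {x : ℚ_[p] | ‖x‖ ≤ (p:ℝ)^n} := by
    have : {x : ℚ_[p] | ‖x‖ ≤ (p:ℝ)^n} = Metric.closedBall 0 ((p:ℝ)^n) := by
      ext x; simp [Metric.mem_closedBall, dist_zero_right]
    rw [this]; exact measurableSet_closedBall
  split_ifs with h
  · have : Set.indicator {x : ℚ_[p] | ‖x‖ ≤ (p:ℝ)^n} (fun x => χ (η * x))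
        = Set.indicator {x : ℚ_[p] | ‖x‖ ≤ (p:ℝ)^n} (fun _ => (1:ℂ)) := by
      apply Set.indicator_congr
      intro x hx
      apply hχ₁
      rw [norm_mul]
      calc ‖η‖ * ‖x‖ ≤ (p:ℝ)^(-n) * (p:ℝ)^n := by
            refine mul_le_mul h hx (norm_nonneg _) (by positivity)
        _ = 1 := by rw [← zpow_add₀ (ne_of_gt hp0), show (-n + n : ℤ) = 0 by ring, zpow_zero]
    rw [this, integral_indicator_const (1:ℂ) hBmeas, measureReal_def, ball_meas p μ hμ n]
    rw [Complex.real_smul, mul_one, toReal_zpow']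
    norm_num
  · -- vanishing case
    set B := {x : ℚ_[p] | ‖x‖ ≤ (p:ℝ)^n} with hB
    push_neg at h
    have hη0 : η ≠ 0 := by
      intro h0; rw [h0, norm_zero] at h; exact absurd h (not_lt.mpr (by positivity))
    set u : ℚ_[p] := η⁻¹ * (p:ℚ_[p])⁻¹ with hu
    have hηlb : (p:ℝ)^(-n+1) ≤ ‖η‖ := by
      by_contra hc
      push_neg at hc
      rw [show (-n+1 : ℤ) = -n + 1 from rfl] at hc
      exact absurd ((Padic.norm_le_pow_iff_norm_lt_pow_add_one η (-n)).mpr hc) (not_le.mpr h)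
    have hnu : ‖u‖ ≤ (p:ℝ)^n := by
      rw [hu, norm_mul, norm_inv, norm_inv, Padic.norm_p, inv_inv]
      have h5 : ‖η‖⁻¹ ≤ (p:ℝ)^(n-1) := by
        rw [show (n-1:ℤ) = -(-n+1) by ring, zpow_neg]
        exact inv_anti₀ (by positivity) hηlb
      have h6 := zpow_add₀ (ne_of_gt hp0) (n-1) 1
      rw [zpow_one] at h6
      calc ‖η‖⁻¹ * (p:ℝ) ≤ (p:ℝ)^(n-1) * (p:ℝ) := by gcongr
        _ = (p:ℝ)^n := by rw [← h6]; norm_num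
    have hηu : ‖η * u‖ = p := by
      rw [hu, ← mul_assoc, mul_inv_cancel₀ hη0, one_mul, norm_inv, Padic.norm_p,
        inv_inv]
    have hχu : χ (η * u) ≠ 1 := hχ₂ _ (by rw [hηu]; exact hp1)
    set g : ℚ_[p] → ℂ := B.indicator (fun x => χ (η * x)) with hg
    have key : ∀ x, g (x + u) = χ (η * u) * g x := by
      intro x
      have hmem : x + u ∈ B ↔ x ∈ B := by
        constructor
        · intro hxu
          have : x = (x + u) + (-u) := by ring
          rw [hB, Set.mem_setOf_eq, this]
          refine le_trans (Padic.nonarchimedean _ _) (max_le hxu ?_)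
          rw [norm_neg]; exact hnu
        · intro hx
          rw [hB, Set.mem_setOf_eq]
          exact le_trans (Padic.nonarchimedean _ _) (max_le hx hnu)
      by_cases hx : x ∈ B
      · rw [hg]
        simp only [Set.indicator_of_mem (hmem.mpr hx), Set.indicator_of_mem hx]
        rw [mul_add, AddChar.map_add_eq_mul, mul_comm]
      · rw [hg]
        simp only [Set.indicator_of_notMem (fun hc => hx (hmem.mp hc)),
          Set.indicator_of_notMem hx, mul_zero]
    have h1 : ∫ x, g x ∂μ = χ (η * u) * ∫ x, g x ∂μ := by
      conv_lhs => rw [← integral_add_right_eq_self g u]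
      simp_rw [key]
      rw [integral_const_mul]
    have this2 : (χ (η * u) - 1) * ∫ x, g x ∂μ = 0 := by
      have := sub_eq_zero.mpr h1.symm
      linear_combination this
    rcases mul_eq_zero.mp this2 with hc | hc
    · exact absurd (sub_eq_zero.mp hc) hχu
    · exact hc

/-- The Fourier transform of the Kozyrev wavelet `Ψ_{rbk}` is
`Ψ̂_{rbk}(ξ) = p^{r/2} χ_p(p^{-r} b ξ) 1_{|p^{-r} ξ + p^{-1} k|_p ≤ 1}`, and
every `ξ` in the support of `Ψ̂_{rbk}` satisfies `|ξ|_p = p^{1−r}`. -/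
theorem wavelet_fourier_transform
    (p : ℕ) [Fact p.Prime]
    [MeasurableSpace ℚ_[p]] [BorelSpace ℚ_[p]]
    (μ : Measure ℚ_[p]) [μ.IsAddHaarMeasure]
    (hμ : μ {x : ℚ_[p] | ‖x‖ ≤ 1} = 1)
    (χ : AddChar ℚ_[p] ℂ)
    (hχ₁ : ∀ x : ℚ_[p], ‖x‖ ≤ 1 → χ x = 1)
    (hχ₂ : ∀ x : ℚ_[p], 1 < ‖x‖ → χ x ≠ 1)
    (r : ℤ) (k : ℕ) (hk₁ : 1 ≤ k) (hk₂ : k ≤ p - 1)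
    (b : ℚ_[p])
    (Ψ : ℚ_[p] → ℂ)
    (hΨ : Ψ = fun x => (((p : ℝ) ^ (-(r : ℝ) / 2) : ℝ) : ℂ) *
        χ ((p : ℚ_[p])⁻¹ * (k : ℚ_[p]) * ((p : ℚ_[p]) ^ r * x - b)) *
        (if ‖(p : ℚ_[p]) ^ r * x - b‖ ≤ 1 then 1 else 0)) :
    (∀ ξ : ℚ_[p],
        ∫ x, Ψ x * χ (ξ * x) ∂μ
          = (((p : ℝ) ^ ((r : ℝ) / 2) : ℝ) : ℂ) * χ ((p : ℚ_[p]) ^ (-r) * b * ξ) *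
              (if ‖(p : ℚ_[p]) ^ (-r) * ξ + (p : ℚ_[p])⁻¹ * (k : ℚ_[p])‖ ≤ 1 then 1 else 0)) ∧
    (∀ ξ : ℚ_[p],
        (((p : ℝ) ^ ((r : ℝ) / 2) : ℝ) : ℂ) * χ ((p : ℚ_[p]) ^ (-r) * b * ξ) *
            (if ‖(p : ℚ_[p]) ^ (-r) * ξ + (p : ℚ_[p])⁻¹ * (k : ℚ_[p])‖ ≤ 1 then 1 else 0) ≠ 0 →
          ‖ξ‖ = (p : ℝ) ^ (1 - r)) := by
  have hp := (Fact.out : p.Prime)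
  have hp1 : (1:ℝ) < p := by exact_mod_cast hp.one_lt
  have hp0 : (0:ℝ) < p := by positivity
  have hpq : (p:ℚ_[p]) ≠ 0 := by exact_mod_cast hp.ne_zero
  have hnormp : ∀ s : ℤ, ‖(p:ℚ_[p]) ^ s‖ = (p:ℝ) ^ (-s) := fun s => by
    rw [Padic.norm_p_zpow]
  have hpinv : ‖(p:ℚ_[p])⁻¹‖ = (p:ℝ) := by
    rw [norm_inv, Padic.norm_p, inv_inv]
  have hcancel : (p:ℚ_[p]) ^ r * (p:ℚ_[p]) ^ (-r) = 1 := by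
    rw [← zpow_add₀ hpq, show (r + -r : ℤ) = 0 by ring, zpow_zero]
  have hcancel' : (p:ℚ_[p]) ^ (-r) * (p:ℚ_[p]) ^ r = 1 := by
    rw [mul_comm]; exact hcancel
  have hknorm : ‖(k:ℚ_[p])‖ = 1 := by
    have hle : ‖(k:ℚ_[p])‖ ≤ 1 := by
      have := Padic.norm_int_le_one (p := p) (k : ℤ)
      push_cast at this; exact this
    rcases lt_or_eq_of_le hle with hlt | heq
    · exfalso
      have : ‖((k : ℤ) : ℚ_[p])‖ < 1 := by push_cast; exact hlt
      rw [Padic.norm_intCast_lt_one_iff] at this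
      have := Int.le_of_dvd (by exact_mod_cast hk₁) this
      omega
    · exact heq
  -- key condition equivalence
  have hcond : ∀ ξ : ℚ_[p],
      (‖(p : ℚ_[p]) ^ (-r) * ξ + (p : ℚ_[p])⁻¹ * (k : ℚ_[p])‖ ≤ 1 ↔
        ‖ξ + (p : ℚ_[p])⁻¹ * (k : ℚ_[p]) * (p : ℚ_[p]) ^ r‖ ≤ (p:ℝ) ^ (-r)) := by
    intro ξ
    have hfact : (p : ℚ_[p]) ^ (-r) * ξ + (p : ℚ_[p])⁻¹ * (k : ℚ_[p]) =
        (p : ℚ_[p]) ^ (-r) * (ξ + (p : ℚ_[p])⁻¹ * (k : ℚ_[p]) * (p : ℚ_[p]) ^ r) := by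
      rw [mul_add]
      congr 1
      rw [mul_comm ((p : ℚ_[p])⁻¹ * (k : ℚ_[p])), ← mul_assoc, hcancel', one_mul]
    rw [hfact, norm_mul, hnormp, neg_neg]
    constructor
    · intro hle
      rw [mul_comm] at hle
      have := (le_div_iff₀ (zpow_pos hp0 r)).mpr hle
      rwa [one_div, ← zpow_neg] at this
    · intro hle
      calc (p:ℝ)^r * ‖ξ + (p : ℚ_[p])⁻¹ * (k : ℚ_[p]) * (p : ℚ_[p]) ^ r‖
          ≤ (p:ℝ)^r * (p:ℝ)^(-r) := by gcongr
        _ = 1 := by rw [← zpow_add₀ (ne_of_gt hp0), show (r + -r : ℤ) = 0 by ring, zpow_zero]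
  constructor
  · -- Part 1: the Fourier transform formula
    intro ξ
    set c : ℚ_[p] := (p:ℚ_[p])^(-r) * b with hc
    set η : ℚ_[p] := ξ + (p:ℚ_[p])⁻¹ * (k:ℚ_[p]) * (p:ℚ_[p])^r with hη
    have harg : ∀ x : ℚ_[p], (p:ℚ_[p])^r * (c + x) - b = (p:ℚ_[p])^r * x := by
      intro x
      rw [hc, mul_add, ← mul_assoc, hcancel, one_mul]; ring
    have hiff : ∀ x : ℚ_[p], (‖(p:ℚ_[p])^r * (c+x) - b‖ ≤ 1 ↔ ‖x‖ ≤ (p:ℝ)^r) := by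
      intro x
      rw [harg x, norm_mul, hnormp]
      constructor
      · intro h
        rw [mul_comm] at h
        have := (le_div_iff₀ (zpow_pos hp0 (-r))).mpr h
        rwa [one_div, ← zpow_neg, neg_neg] at this
      · intro h
        calc (p:ℝ)^(-r) * ‖x‖ ≤ (p:ℝ)^(-r) * (p:ℝ)^r := by gcongr
          _ = 1 := by
            rw [← zpow_add₀ (ne_of_gt hp0), show (-r + r : ℤ) = 0 by ring, zpow_zero]
    have hpt : ∀ x : ℚ_[p], Ψ (c + x) * χ (ξ * (c + x)) =
        (((p : ℝ) ^ (-(r:ℝ)/2) : ℝ) : ℂ) * χ (ξ * c) *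
          Set.indicator {y : ℚ_[p] | ‖y‖ ≤ (p:ℝ)^r} (fun y => χ (η * y)) x := by
      intro x
      by_cases hx : ‖x‖ ≤ (p:ℝ)^r
      · have hind : Set.indicator {y : ℚ_[p] | ‖y‖ ≤ (p:ℝ)^r} (fun y => χ (η * y)) x
            = χ (η * x) :=
          Set.indicator_of_mem (show x ∈ {y : ℚ_[p] | ‖y‖ ≤ (p:ℝ)^r} from hx) _
        have hc1 : ‖(p:ℚ_[p])^r * x‖ ≤ 1 := by rw [← harg x]; exact (hiff x).mpr hx
        rw [hΨ]
        simp only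
        rw [harg x, if_pos hc1, hind]
        rw [show ξ * (c+x) = ξ*c + ξ*x by ring, AddChar.map_add_eq_mul]
        rw [show η * x = (p:ℚ_[p])⁻¹*(k:ℚ_[p])*((p:ℚ_[p])^r*x) + ξ*x by rw [hη]; ring,
          AddChar.map_add_eq_mul]
        ring
      · rw [hΨ]
        simp only
        rw [if_neg (fun hc' => hx ((hiff x).mp hc')),
          Set.indicator_of_notMem (show x ∉ {y : ℚ_[p] | ‖y‖ ≤ (p:ℝ)^r} from hx)]
        ring
    have hint : ∫ x, Ψ x * χ (ξ * x) ∂μ = ∫ x, Ψ (c + x) * χ (ξ * (c + x)) ∂μ :=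
      (integral_add_left_eq_self (fun x => Ψ x * χ (ξ * x)) c).symm
    rw [hint]
    simp_rw [hpt]
    rw [integral_const_mul, char_ball_int p μ hμ χ hχ₁ hχ₂ η r]
    have hchi : χ (ξ * c) = χ ((p:ℚ_[p])^(-r) * b * ξ) := by
      rw [hc, show ξ * ((p:ℚ_[p])^(-r) * b) = (p:ℚ_[p])^(-r) * b * ξ by ring]
    have hpow : ((p:ℝ)^(-(r:ℝ)/2)) * ((p:ℝ)^(r:ℤ)) = (p:ℝ)^((r:ℝ)/2) := by
      rw [← Real.rpow_intCast (p:ℝ) r, ← Real.rpow_add hp0]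
      congr 1
      ring
    by_cases hcase : ‖η‖ ≤ (p:ℝ)^(-r)
    · rw [if_pos hcase, if_pos ((hcond ξ).mpr hcase)]
      rw [mul_one, ← hchi]
      calc (((p : ℝ) ^ (-(r:ℝ)/2) : ℝ) : ℂ) * χ (ξ * c) * (((p:ℝ)^(r:ℤ) : ℝ) : ℂ)
          = ((((p:ℝ)^(-(r:ℝ)/2)) * ((p:ℝ)^(r:ℤ)) : ℝ) : ℂ) * χ (ξ * c) := by
            push_cast; ring
        _ = (((p : ℝ) ^ ((r : ℝ) / 2) : ℝ) : ℂ) * χ (ξ * c) := by rw [hpow]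
    · rw [if_neg hcase, if_neg (fun hcc => hcase ((hcond ξ).mp hcc))]
      simp
  · -- Part 2: support condition
    intro ξ hne
    by_cases hcnd2 : ‖(p : ℚ_[p]) ^ (-r) * ξ + (p : ℚ_[p])⁻¹ * (k : ℚ_[p])‖ ≤ 1
    swap
    · exfalso; apply hne; rw [if_neg hcnd2, mul_zero]
    have hA := (hcond ξ).mp hcnd2
    set D : ℚ_[p] := (p:ℚ_[p])⁻¹ * (k:ℚ_[p]) * (p:ℚ_[p])^r with hD
    have hDnorm : ‖D‖ = (p:ℝ)^(1-r) := by
      rw [hD, norm_mul, norm_mul, hpinv, hknorm, hnormp, mul_one]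
      have h6 := zpow_add₀ (ne_of_gt hp0) 1 (-r)
      rw [zpow_one] at h6
      rw [← h6, show (1 + -r : ℤ) = 1 - r by ring]
    have hlt : ‖ξ + D‖ < ‖D‖ := by
      rw [hDnorm]
      calc ‖ξ + D‖ ≤ (p:ℝ)^(-r) := hA
        _ < (p:ℝ)^(1-r) := by
          apply zpow_lt_zpow_right₀ hp1
          omega
    have hξeq : ξ = (ξ + D) + (-D) := by ring
    rw [show ‖ξ‖ = ‖(ξ + D) + (-D)‖ by rw [← hξeq]]
    rw [Padic.add_eq_max_of_ne (by rw [norm_neg]; exact ne_of_lt hlt)]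
    rw [norm_neg, max_eq_right (le_of_lt hlt), hDnorm]
end

section
/- Let J : ℤ_p → [0,∞) be radial and integrable. For l ≥ 1 and K ∈ G_l = ℤ_p/p^lℤ_p, the convolution satisfies J ∗ 1_{K+p^lℤ_p} = p^{-l} Σ_{I ∈ G_l, I ≠ K} J(|I−K|_p) 1_{I+p^lℤ_p} + ( ∫_{p^lℤ_p} J(|y|_p) dy ) · 1_{K+p^lℤ_p} on ℤ_p. Consequently the space 𝒟_l(ℤ_p) spanned by { 1_{I+p^lℤ_p} : I ∈ G_l } is invariant under φ ↦ J ∗ φ. -/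
open MeasureTheory

namespace ConvAux
variable {p : ℕ} [Fact p.Prime]

lemma norm_nat_le_one (n : ℕ) : ‖(n : ℚ_[p])‖ ≤ 1 := by
  have := Padic.norm_int_le_one (p := p) (n : ℤ)
  simpa using this

lemma norm_sub_le_max (a b : ℚ_[p]) : ‖a - b‖ ≤ max ‖a‖ ‖b‖ := by
  simpa [sub_eq_add_neg] using Padic.nonarchimedean a (-b)

lemma norm_add_eq_right {a b : ℚ_[p]} (h : ‖a‖ < ‖b‖) : ‖a + b‖ = ‖b‖ := by
  rw [Padic.add_eq_max_of_ne (ne_of_lt h)]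
  exact max_eq_right h.le

lemma dist_gt {l n k : ℕ} (hn : n < p ^ l) (hk : k < p ^ l) (hne : n ≠ k) :
    ¬ ‖(n : ℚ_[p]) - (k : ℚ_[p])‖ ≤ (p : ℝ) ^ (-(l : ℤ)) := by
  intro h
  have hcast : (n : ℚ_[p]) - (k : ℚ_[p]) = (((n : ℤ) - (k : ℤ) : ℤ) : ℚ_[p]) := by push_cast; ring
  rw [hcast, Padic.norm_int_le_pow_iff_dvd] at h
  have h0 : ((n : ℤ) - k) ≠ 0 := by
    intro h'; apply hne; omega
  have habs : ((p : ℤ) ^ l) ∣ |(n : ℤ) - k| := (dvd_abs _ _).mpr h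
  have := Int.le_of_dvd (abs_pos.mpr h0) habs
  have hn' : (n : ℤ) < (p : ℤ) ^ l := by exact_mod_cast hn
  have hk' : (k : ℤ) < (p : ℤ) ^ l := by exact_mod_cast hk
  have hlt : |(n : ℤ) - k| < (p : ℤ) ^ l := by
    rw [abs_sub_lt_iff]; omega
  omega

lemma exists_appr (l : ℕ) (x : ℚ_[p]) (hx : ‖x‖ ≤ 1) :
    ∃ n ∈ Finset.range (p ^ l), ‖x - (n : ℚ_[p])‖ ≤ (p : ℝ) ^ (-(l : ℤ)) := by
  set z : ℤ_[p] := ⟨x, hx⟩ with hz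
  refine ⟨z.appr l, Finset.mem_range.mpr (PadicInt.appr_lt z l), ?_⟩
  have hmem := PadicInt.appr_spec l z
  have hnorm := (PadicInt.norm_le_pow_iff_mem_span_pow (z - (z.appr l : ℤ_[p])) l).mpr hmem
  have hcoe : ((z - (z.appr l : ℤ_[p]) : ℤ_[p]) : ℚ_[p]) = x - (z.appr l : ℚ_[p]) := by
    push_cast [hz]
    rfl
  rwa [PadicInt.norm_def, hcoe] at hnorm

end ConvAux

open ConvAux

theorem convolution_ball_indicator_formula_and_invariance
    (p : ℕ) [Fact p.Prime]
    [MeasurableSpace ℚ_[p]] [BorelSpace ℚ_[p]]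
    (μ : Measure ℚ_[p]) [μ.IsAddHaarMeasure]
    (hμ : μ {x : ℚ_[p] | ‖x‖ ≤ 1} = 1)
    (J : ℚ_[p] → ℝ)
    (hJpos : ∀ x, 0 ≤ J x)
    (hJrad : ∀ x y : ℚ_[p], ‖x‖ = ‖y‖ → J x = J y)
    (hJsupp : ∀ x : ℚ_[p], 1 < ‖x‖ → J x = 0)
    (hJint : IntegrableOn J {x : ℚ_[p] | ‖x‖ ≤ 1} μ)
    (l : ℕ) (hl : 1 ≤ l) :
    (∀ k₀ ∈ Finset.range (p ^ l), ∀ x : ℚ_[p], ‖x‖ ≤ 1 →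
      ∫ y, J y * (if ‖(x - y) - (k₀ : ℚ_[p])‖ ≤ (p : ℝ) ^ (-(l : ℤ)) then (1:ℝ) else 0) ∂μ
        = (p : ℝ) ^ (-(l : ℤ)) *
            ∑ n ∈ (Finset.range (p ^ l)).erase k₀,
              J ((n : ℚ_[p]) - (k₀ : ℚ_[p])) *
                (if ‖x - (n : ℚ_[p])‖ ≤ (p : ℝ) ^ (-(l : ℤ)) then (1:ℝ) else 0)
          + (∫ y in {y : ℚ_[p] | ‖y‖ ≤ (p : ℝ) ^ (-(l : ℤ))}, J y ∂μ) *
              (if ‖x - (k₀ : ℚ_[p])‖ ≤ (p : ℝ) ^ (-(l : ℤ)) then (1:ℝ) else 0)) ∧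
    (∀ φ : ℚ_[p] → ℝ,
      φ ∈ Submodule.span ℝ
        {f : ℚ_[p] → ℝ | ∃ n ∈ Finset.range (p ^ l),
          f = fun x => if ‖x - (n : ℚ_[p])‖ ≤ (p : ℝ) ^ (-(l : ℤ)) then (1:ℝ) else 0} →
      (fun x => ∫ y, J y * φ (x - y) ∂μ) ∈ Submodule.span ℝ
        {f : ℚ_[p] → ℝ | ∃ n ∈ Finset.range (p ^ l),
          f = fun x => if ‖x - (n : ℚ_[p])‖ ≤ (p : ℝ) ^ (-(l : ℤ)) then (1:ℝ) else 0}) := by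
  set r : ℝ := (p : ℝ) ^ (-(l : ℤ)) with hrdef
  have hp1 : (1:ℝ) ≤ (p:ℝ) := by exact_mod_cast (Fact.out : p.Prime).one_lt.le
  have hr1 : r ≤ 1 := zpow_le_one_of_nonpos₀ hp1 (by simp)
  -- measurability of balls
  have hmeas : ∀ c : ℚ_[p], MeasurableSet {y : ℚ_[p] | ‖y - c‖ ≤ r} := by
    intro c
    have h : {y : ℚ_[p] | ‖y - c‖ ≤ r} = Metric.closedBall c r := by
      ext y; simp [Metric.mem_closedBall, dist_eq_norm]
    rw [h]; exact measurableSet_closedBall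
  have hmeas0 : MeasurableSet {y : ℚ_[p] | ‖y‖ ≤ r} := by
    have h : {y : ℚ_[p] | ‖y‖ ≤ r} = {y : ℚ_[p] | ‖y - 0‖ ≤ r} := by simp
    rw [h]; exact hmeas 0
  have hmeas1 : MeasurableSet {x : ℚ_[p] | ‖x‖ ≤ 1} := by
    have h : {y : ℚ_[p] | ‖y‖ ≤ 1} = Metric.closedBall 0 1 := by
      ext y; simp [Metric.mem_closedBall, dist_eq_norm]
    rw [h]; exact measurableSet_closedBall
  have htrans : ∀ c : ℚ_[p], μ {y : ℚ_[p] | ‖y - c‖ ≤ r} = μ {y : ℚ_[p] | ‖y‖ ≤ r} := by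
    intro c
    have h : {y : ℚ_[p] | ‖y - c‖ ≤ r} = (fun y => (-c) + y) ⁻¹' {y : ℚ_[p] | ‖y‖ ≤ r} := by
      ext y; simp [neg_add_eq_sub]
    rw [h, measure_preimage_add]
  -- global integrability of J
  have hJglob : Integrable J μ := by
    have heq : Set.indicator {x : ℚ_[p] | ‖x‖ ≤ 1} J = J := by
      funext x
      by_cases h : ‖x‖ ≤ 1
      · simp [Set.indicator_of_mem, h]
      · simp [Set.indicator, h, hJsupp x (lt_of_not_ge h)]
    rw [← heq]; exact hJint.integrable_indicator hmeas1
  -- partition of the unit ball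
  have hnorm_le_one : ∀ (y : ℚ_[p]) (n : ℕ), ‖y - (n:ℚ_[p])‖ ≤ r → ‖y‖ ≤ 1 := by
    intro y n h
    have h2 : ‖y‖ ≤ max ‖y - (n:ℚ_[p])‖ ‖(n:ℚ_[p])‖ := by
      simpa using Padic.nonarchimedean (y - (n:ℚ_[p])) (n:ℚ_[p])
    exact h2.trans (max_le (h.trans hr1) (norm_nat_le_one n))
  have hpart : {x : ℚ_[p] | ‖x‖ ≤ 1}
      = ⋃ n ∈ Finset.range (p ^ l), {y : ℚ_[p] | ‖y - (n:ℚ_[p])‖ ≤ r} := by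
    ext y
    simp only [Set.mem_setOf_eq, Set.mem_iUnion, exists_prop]
    constructor
    · intro hy
      exact exists_appr l y hy
    · rintro ⟨n, _, h⟩; exact hnorm_le_one y n h
  have hdisj : (↑(Finset.range (p ^ l)) : Set ℕ).PairwiseDisjoint
      (fun n => {y : ℚ_[p] | ‖y - (n:ℚ_[p])‖ ≤ r}) := by
    intro a ha b hb hab
    simp only [Finset.coe_range, Set.mem_Iio] at ha hb
    refine Set.disjoint_left.mpr ?_
    intro y hya hyb
    apply dist_gt (p := p) ha hb hab
    have h : (a:ℚ_[p]) - (b:ℚ_[p]) = (y - (b:ℚ_[p])) - (y - (a:ℚ_[p])) := by ring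
    rw [h]
    exact (norm_sub_le_max _ _).trans (max_le hyb hya)
  have hsum : (1 : ENNReal) = (p ^ l : ℕ) * μ {y : ℚ_[p] | ‖y‖ ≤ r} := by
    rw [← hμ, hpart, measure_biUnion_finset hdisj (fun n _ => hmeas _)]
    simp [htrans, Finset.sum_const, Finset.card_range, nsmul_eq_mul]
  have htoReal : (μ {y : ℚ_[p] | ‖y‖ ≤ r}).toReal = r := by
    have h := congrArg ENNReal.toReal hsum
    rw [ENNReal.toReal_mul] at h
    rw [show (((p ^ l : ℕ) : ENNReal)).toReal = ((p ^ l : ℕ) : ℝ) by simp,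
      ENNReal.toReal_one] at h
    have hppos : (0:ℝ) < (p:ℝ)^l := by positivity
    have hpl : ((p ^ l : ℕ) : ℝ) = (p:ℝ) ^ l := by push_cast; ring
    rw [hpl] at h
    have hrval : r = ((p:ℝ)^l)⁻¹ := by rw [hrdef, zpow_neg, zpow_natCast]
    exact (eq_inv_of_mul_eq_one_right h.symm).trans hrval.symm
  -- the pointwise integrand identity
  have hintegrand : ∀ (k₀ : ℕ) (x y : ℚ_[p]),
      J y * (if ‖(x - y) - (k₀ : ℚ_[p])‖ ≤ r then (1:ℝ) else 0)
        = Set.indicator {z : ℚ_[p] | ‖z - (x - (k₀:ℚ_[p]))‖ ≤ r} J y := by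
    intro k₀ x y
    have hnn : ‖(x - y) - (k₀:ℚ_[p])‖ = ‖y - (x - (k₀:ℚ_[p]))‖ := by
      rw [show (x - y) - (k₀:ℚ_[p]) = -(y - (x - (k₀:ℚ_[p]))) by ring, norm_neg]
    by_cases h : ‖y - (x - (k₀:ℚ_[p]))‖ ≤ r
    · rw [Set.indicator_of_mem
          (show y ∈ {z : ℚ_[p] | ‖z - (x - (k₀:ℚ_[p]))‖ ≤ r} from h),
        if_pos (by rw [hnn]; exact h), mul_one]
    · rw [Set.indicator_of_notMem
          (show y ∉ {z : ℚ_[p] | ‖z - (x - (k₀:ℚ_[p]))‖ ≤ r} from h),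
        if_neg (by rw [hnn]; exact h), mul_zero]
  -- KEY formula, valid for all x
  have key : ∀ k₀ ∈ Finset.range (p ^ l), ∀ x : ℚ_[p],
      ∫ y, J y * (if ‖(x - y) - (k₀ : ℚ_[p])‖ ≤ r then (1:ℝ) else 0) ∂μ
        = r * ∑ n ∈ (Finset.range (p ^ l)).erase k₀,
              J ((n : ℚ_[p]) - (k₀ : ℚ_[p])) * (if ‖x - (n : ℚ_[p])‖ ≤ r then (1:ℝ) else 0)
          + (∫ y in {y : ℚ_[p] | ‖y‖ ≤ r}, J y ∂μ)
              * (if ‖x - (k₀ : ℚ_[p])‖ ≤ r then (1:ℝ) else 0) := by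
    intro k₀ hk₀ x
    rw [Finset.mem_range] at hk₀
    have hLHS : ∫ y, J y * (if ‖(x - y) - (k₀ : ℚ_[p])‖ ≤ r then (1:ℝ) else 0) ∂μ
        = ∫ y in {z : ℚ_[p] | ‖z - (x - (k₀:ℚ_[p]))‖ ≤ r}, J y ∂μ := by
      simp only [hintegrand k₀ x]
      exact integral_indicator (hmeas _)
    by_cases hx : ‖x‖ ≤ 1
    · obtain ⟨n, hnmem', hn⟩ := exists_appr l x hx
      have hnmem : n < p ^ l := Finset.mem_range.mp hnmem'
      have honly : ∀ m : ℕ, m < p ^ l → m ≠ n → ¬ ‖x - (m:ℚ_[p])‖ ≤ r := by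
        intro m hm hmn h
        apply dist_gt (p := p) hnmem hm (fun he => hmn he.symm)
        rw [show (n:ℚ_[p]) - (m:ℚ_[p]) = (x - (m:ℚ_[p])) - (x - (n:ℚ_[p])) by ring]
        exact (norm_sub_le_max _ _).trans (max_le h hn)
      by_cases hnk : n = k₀
      · subst hnk
        have hsets : {z : ℚ_[p] | ‖z - (x - (n:ℚ_[p]))‖ ≤ r} = {y : ℚ_[p] | ‖y‖ ≤ r} := by
          ext y
          simp only [Set.mem_setOf_eq]
          constructor
          · intro h
            calc ‖y‖ = ‖(y - (x - (n:ℚ_[p]))) + (x - (n:ℚ_[p]))‖ := congrArg norm (by ring)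
              _ ≤ max ‖y - (x - (n:ℚ_[p]))‖ ‖x - (n:ℚ_[p])‖ := Padic.nonarchimedean _ _
              _ ≤ r := max_le h hn
          · intro h
            exact (norm_sub_le_max _ _).trans (max_le h hn)
        rw [hLHS, hsets, Finset.sum_eq_zero, if_pos hn]
        · ring
        · intro m hm
          rw [Finset.mem_erase] at hm
          rw [if_neg (honly m (Finset.mem_range.mp hm.2) hm.1), mul_zero]
      · have hkn : ¬ ‖x - (k₀:ℚ_[p])‖ ≤ r := honly k₀ hk₀ (fun he => hnk he.symm)
        have hnkgt : ¬ ‖(n:ℚ_[p]) - (k₀:ℚ_[p])‖ ≤ r := dist_gt hnmem hk₀ hnk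
        have hconst : ∀ y ∈ {z : ℚ_[p] | ‖z - (x - (k₀:ℚ_[p]))‖ ≤ r},
            J y = J ((n:ℚ_[p]) - (k₀:ℚ_[p])) := by
          intro y hy
          have hy' : ‖y - (x - (k₀:ℚ_[p]))‖ ≤ r := hy
          have h1 : ‖y - ((n:ℚ_[p]) - (k₀:ℚ_[p]))‖ ≤ r := by
            rw [show y - ((n:ℚ_[p]) - (k₀:ℚ_[p]))
                = (y - (x - (k₀:ℚ_[p]))) - ((n:ℚ_[p]) - x) by ring]
            refine (norm_sub_le_max _ _).trans (max_le hy' ?_)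
            rw [show (n:ℚ_[p]) - x = -(x - (n:ℚ_[p])) by ring, norm_neg]
            exact hn
          have h2 : ‖y‖ = ‖(n:ℚ_[p]) - (k₀:ℚ_[p])‖ := by
            calc ‖y‖ = ‖(y - ((n:ℚ_[p]) - (k₀:ℚ_[p]))) + ((n:ℚ_[p]) - (k₀:ℚ_[p]))‖ :=
                  congrArg norm (by ring)
              _ = _ := norm_add_eq_right (lt_of_le_of_lt h1 (lt_of_not_ge hnkgt))
          exact hJrad _ _ h2
        rw [hLHS, setIntegral_congr_fun (hmeas _) hconst, setIntegral_const, measureReal_def, htrans, htoReal]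
        rw [if_neg hkn,
          Finset.sum_eq_single_of_mem n (Finset.mem_erase.mpr ⟨hnk, Finset.mem_range.mpr hnmem⟩)]
        · rw [if_pos hn]; simp only [smul_eq_mul]; ring
        · intro m hm hmn
          rw [Finset.mem_erase, Finset.mem_range] at hm
          rw [if_neg (honly m hm.2 hmn), mul_zero]
    · -- ‖x‖ > 1 : both sides vanish
      have hx' : 1 < ‖x‖ := lt_of_not_ge hx
      have hxc : ∀ n : ℕ, ‖x - (n:ℚ_[p])‖ = ‖x‖ := by
        intro n
        rw [show x - (n:ℚ_[p]) = -(n:ℚ_[p]) + x by ring]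
        exact norm_add_eq_right (by rw [norm_neg]; exact lt_of_le_of_lt (norm_nat_le_one n) hx')
      have hxn : ∀ n : ℕ, ¬ ‖x - (n:ℚ_[p])‖ ≤ r := by
        intro n h
        rw [hxc n] at h
        exact absurd (h.trans hr1) (not_le.mpr hx')
      have hzero : ∀ y ∈ {z : ℚ_[p] | ‖z - (x - (k₀:ℚ_[p]))‖ ≤ r}, J y = (fun _ => (0:ℝ)) y := by
        intro y hy
        have hy' : ‖y - (x - (k₀:ℚ_[p]))‖ ≤ r := hy
        have hcnorm : 1 < ‖x - (k₀:ℚ_[p])‖ := by rw [hxc k₀]; exact hx'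
        have h2 : ‖y‖ = ‖x - (k₀:ℚ_[p])‖ := by
          calc ‖y‖ = ‖(y - (x - (k₀:ℚ_[p]))) + (x - (k₀:ℚ_[p]))‖ := congrArg norm (by ring)
            _ = _ := norm_add_eq_right
                (lt_of_le_of_lt (hy'.trans hr1) hcnorm)
        exact hJsupp y (by rw [h2]; exact hcnorm)
      rw [hLHS, setIntegral_congr_fun (hmeas _) hzero]
      simp only [integral_zero]
      rw [Finset.sum_eq_zero, if_neg (hxn k₀)]
      · ring
      · intro m hm
        rw [if_neg (hxn m), mul_zero]
  refine ⟨fun k₀ hk₀ x _ => key k₀ hk₀ x, ?_⟩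
  -- Part 2: invariance of the span
  intro φ hφ
  have main : ∀ ψ : ℚ_[p] → ℝ, ψ ∈ Submodule.span ℝ
      {f : ℚ_[p] → ℝ | ∃ n ∈ Finset.range (p ^ l),
        f = fun x => if ‖x - (n : ℚ_[p])‖ ≤ r then (1:ℝ) else 0} →
      (∀ x : ℚ_[p], Integrable (fun y => J y * ψ (x - y)) μ) ∧
      (fun x => ∫ y, J y * ψ (x - y) ∂μ) ∈ Submodule.span ℝ
        {f : ℚ_[p] → ℝ | ∃ n ∈ Finset.range (p ^ l),
          f = fun x => if ‖x - (n : ℚ_[p])‖ ≤ r then (1:ℝ) else 0} := by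
    intro ψ hψ
    induction hψ using Submodule.span_induction with
    | mem f hf =>
      obtain ⟨n, hn, rfl⟩ := hf
      constructor
      · intro x
        have h : (fun y => J y * (if ‖(x - y) - (n:ℚ_[p])‖ ≤ r then (1:ℝ) else 0))
            = Set.indicator {z : ℚ_[p] | ‖z - (x - (n:ℚ_[p]))‖ ≤ r} J :=
          funext (hintegrand n x)
        show Integrable (fun y => J y * (if ‖(x - y) - (n:ℚ_[p])‖ ≤ r then (1:ℝ) else 0)) μ
        rw [h]
        exact hJglob.indicator (hmeas _)
      · have heq : (fun x => ∫ y, J y * (if ‖(x - y) - (n:ℚ_[p])‖ ≤ r then (1:ℝ) else 0) ∂μ)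
            = (r • ∑ m ∈ (Finset.range (p ^ l)).erase n,
                 J ((m:ℚ_[p]) - (n:ℚ_[p])) •
                   (fun x : ℚ_[p] => if ‖x - (m:ℚ_[p])‖ ≤ r then (1:ℝ) else 0))
              + (∫ y in {y : ℚ_[p] | ‖y‖ ≤ r}, J y ∂μ) •
                  (fun x : ℚ_[p] => if ‖x - (n:ℚ_[p])‖ ≤ r then (1:ℝ) else 0) := by
          funext x
          show (∫ y, J y * (if ‖(x - y) - (n:ℚ_[p])‖ ≤ r then (1:ℝ) else 0) ∂μ) = _
          rw [key n hn x]
          simp only [Pi.add_apply, Pi.smul_apply, Finset.sum_apply, smul_eq_mul]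
        show (fun x => ∫ y, J y * (if ‖(x - y) - (n:ℚ_[p])‖ ≤ r then (1:ℝ) else 0) ∂μ) ∈ _
        rw [heq]
        refine Submodule.add_mem _
          (Submodule.smul_mem _ _ (Submodule.sum_mem _ ?_))
          (Submodule.smul_mem _ _ (Submodule.subset_span ⟨n, hn, rfl⟩))
        intro m hm
        exact Submodule.smul_mem _ _
          (Submodule.subset_span ⟨m, (Finset.mem_erase.mp hm).2, rfl⟩)
    | zero =>
      constructor
      · intro x
        simp only [Pi.zero_apply, mul_zero]
        exact integrable_zero _ _ _
      · have h : (fun x : ℚ_[p] => ∫ y, J y * (0 : ℚ_[p] → ℝ) (x - y) ∂μ) = 0 := by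
          funext x; simp
        rw [h]; exact Submodule.zero_mem _
    | add f g hf hg ihf ihg =>
      obtain ⟨hfint, hfmem⟩ := ihf
      obtain ⟨hgint, hgmem⟩ := ihg
      constructor
      · intro x
        have h : (fun y => J y * (f + g) (x - y))
            = (fun y => J y * f (x - y)) + (fun y => J y * g (x - y)) := by
          funext y; simp [mul_add]
        rw [h]; exact (hfint x).add (hgint x)
      · have h : (fun x => ∫ y, J y * (f + g) (x - y) ∂μ)
            = (fun x => ∫ y, J y * f (x - y) ∂μ) + (fun x => ∫ y, J y * g (x - y) ∂μ) := by
          funext x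
          simp only [Pi.add_apply, mul_add]
          exact integral_add (hfint x) (hgint x)
        rw [h]; exact Submodule.add_mem _ hfmem hgmem
    | smul c f hf ihf =>
      obtain ⟨hfint, hfmem⟩ := ihf
      constructor
      · intro x
        have h : (fun y => J y * (c • f) (x - y)) = fun y => c * (J y * f (x - y)) := by
          funext y; simp only [Pi.smul_apply, smul_eq_mul]; ring
        rw [h]; exact (hfint x).const_mul c
      · have h : (fun x => ∫ y, J y * (c • f) (x - y) ∂μ)
            = c • (fun x => ∫ y, J y * f (x - y) ∂μ) := by
          funext x
          simp only [Pi.smul_apply, smul_eq_mul]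
          rw [show (fun y => J y * (c * f (x - y))) = fun y => c * (J y * f (x - y)) from
            funext fun y => by ring]
          exact integral_const_mul c _
        rw [h]; exact Submodule.smul_mem _ _ hfmem
  exact (main φ hφ).2
end

section
/- Let Ĵ : ℚ_p → ℝ be a radial, ℤ_p-periodic, locally constant function with Ĵ(0) = 1 and |Ĵ| ≤ 1. For t > 0 define Z₀(x,t) as the inverse Fourier transform (as a distribution) of e^{−t(1−Ĵ(|ξ|_p))}. Then for x ∈ ℤ_p \ {0}, Z₀(x,t) = 1 + Σ_{j=1}^{1+ord(x)} e^{−t(1−Ĵ(p^j))}( p^j 1_{|x|_p ≤ p^{−j}} − p^{j−1} 1_{|x|_p ≤ p^{−(j−1)}} ), the sum being finite since the j-th term vanishes for j ≥ 2 + ord(x). -/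
open MeasureTheory Filter

set_option linter.unusedSectionVars false
set_option linter.unusedVariables false

section Aux

variable {p : ℕ} [Fact p.Prime]

lemma locConst_continuous {α : Type*} [TopologicalSpace α] (g : ℚ_[p] → α)
    (h : ∀ a b : ℚ_[p], ‖a - b‖ ≤ 1 → g a = g b) : Continuous g := by
  rw [continuous_iff_continuousAt]
  intro a
  have he : ∀ᶠ b in nhds a, g b = g a := by
    filter_upwards [Metric.closedBall_mem_nhds a one_pos] with b hb
    exact h b a (by simpa [dist_eq_norm] using hb)
  exact Filter.Tendsto.congr' (he.mono fun b hb => hb.symm) tendsto_const_nhds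

lemma ball_measurable (r : ℝ) [MeasurableSpace ℚ_[p]] [BorelSpace ℚ_[p]] :
    MeasurableSet {ξ : ℚ_[p] | ‖ξ‖ ≤ r} :=
  (isClosed_le continuous_norm continuous_const).measurableSet

lemma ball_eq_closedBall (r : ℝ) : {ξ : ℚ_[p] | ‖ξ‖ ≤ r} = Metric.closedBall (0:ℚ_[p]) r := by
  ext ξ; simp [Metric.mem_closedBall, dist_eq_norm]

lemma norm_p_zpow (k : ℤ) : ‖((p:ℚ_[p]) ^ k)‖ = (p : ℝ) ^ (-k) := by
  rw [norm_zpow, Padic.norm_p, inv_zpow, ← zpow_neg]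

lemma one_lt_p : (1 : ℝ) < p := by exact_mod_cast (Fact.out : p.Prime).one_lt

lemma exists_digit (u : ℚ_[p]) (hu : ‖u‖ ≤ 1) :
    ∃ k : ℕ, k < p ∧ ‖u - (k : ℚ_[p])‖ ≤ (p : ℝ)⁻¹ := by
  set z : ℤ_[p] := ⟨u, hu⟩ with hz
  refine ⟨z.appr 1, by simpa using z.appr_lt 1, ?_⟩
  have hspec := PadicInt.appr_spec 1 z
  rw [Ideal.mem_span_singleton] at hspec
  obtain ⟨y, hy⟩ := hspec
  have hcoe : u - ((z.appr 1 : ℕ) : ℚ_[p]) = ((p:ℚ_[p]) ^ 1) * (y : ℚ_[p]) := by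
    have := congrArg (fun w : ℤ_[p] => (w : ℚ_[p])) hy
    push_cast at this
    simpa using this
  rw [hcoe, norm_mul, pow_one, Padic.norm_p]
  calc (p:ℝ)⁻¹ * ‖(y : ℚ_[p])‖ ≤ (p:ℝ)⁻¹ * 1 :=
        mul_le_mul_of_nonneg_left y.property (by positivity)
    _ = (p:ℝ)⁻¹ := mul_one _

end Aux

section Measure
variable {p : ℕ} [Fact p.Prime] [MeasurableSpace ℚ_[p]] [BorelSpace ℚ_[p]]
variable (μ : Measure ℚ_[p]) [μ.IsAddHaarMeasure]

lemma ball_volume (hμ : μ {x : ℚ_[p] | ‖x‖ ≤ 1} = 1) :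
    ∀ n : ℕ, μ {ξ : ℚ_[p] | ‖ξ‖ ≤ (p:ℝ) ^ (n:ℤ)} = (p : ENNReal) ^ n := by
  have hp1 : (1:ℝ) < p := one_lt_p
  have hp0R : (0:ℝ) < p := lt_trans one_pos hp1
  have hpne : (p:ℝ) ≠ 0 := hp0R.ne'
  intro n
  induction n with
  | zero => simpa using hμ
  | succ n ih =>
    simp only [Nat.cast_add, Nat.cast_one]
    set c : ℚ_[p] := (p:ℚ_[p]) ^ (-((n:ℤ)+1)) with hc
    have hcnorm : ‖c‖ = (p : ℝ) ^ ((n:ℤ)+1) := by rw [hc, norm_p_zpow, neg_neg]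
    have hp0 : (p : ℚ_[p]) ≠ 0 := by
      exact_mod_cast Nat.cast_ne_zero.mpr (Fact.out : p.Prime).ne_zero
    set C : ℕ → Set ℚ_[p] := fun k => {ξ | ‖ξ - (k:ℚ_[p]) * c‖ ≤ (p:ℝ) ^ (n:ℤ)} with hC
    have hcover : {ξ : ℚ_[p] | ‖ξ‖ ≤ (p:ℝ) ^ ((n:ℤ)+1)} = ⋃ k ∈ Finset.range p, C k := by
      ext ξ
      simp only [Set.mem_setOf_eq, Set.mem_iUnion, Finset.mem_range, exists_prop]
      constructor
      · intro hξ
        set u : ℚ_[p] := ξ * (p:ℚ_[p]) ^ ((n:ℤ)+1) with hu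
        have hunorm : ‖u‖ ≤ 1 := by
          rw [hu, norm_mul, norm_p_zpow]
          calc ‖ξ‖ * (p:ℝ) ^ (-((n:ℤ)+1))
              ≤ (p:ℝ) ^ ((n:ℤ)+1) * (p:ℝ) ^ (-((n:ℤ)+1)) :=
                mul_le_mul_of_nonneg_right hξ (zpow_nonneg hp0R.le _)
            _ = 1 := by
                have he : (n:ℤ) + 1 + -((n:ℤ) + 1) = 0 := by ring
                rw [← zpow_add₀ hpne, he, zpow_zero]
        obtain ⟨k, hk, hk2⟩ := exists_digit u hunorm
        refine ⟨k, hk, ?_⟩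
        have hid : ξ - (k:ℚ_[p]) * c = (u - (k:ℚ_[p])) * c := by
          have he : (n:ℤ) + 1 + -((n:ℤ) + 1) = 0 := by ring
          have h5 : u * c = ξ := by
            rw [hu, hc, mul_assoc, ← zpow_add₀ hp0, he, zpow_zero, mul_one]
          rw [sub_mul, h5]
        show ‖ξ - (k:ℚ_[p]) * c‖ ≤ (p:ℝ) ^ (n:ℤ)
        rw [hid, norm_mul, hcnorm]
        calc ‖u - (k:ℚ_[p])‖ * (p:ℝ) ^ ((n:ℤ)+1)
            ≤ (p:ℝ)⁻¹ * (p:ℝ) ^ ((n:ℤ)+1) :=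
              mul_le_mul_of_nonneg_right hk2 (zpow_nonneg hp0R.le _)
          _ = (p:ℝ) ^ (n:ℤ) := by
              rw [← zpow_neg_one, ← zpow_add₀ hpne]
              congr 1
              ring
      · rintro ⟨k, hk, hξ⟩
        have hξ' : ‖ξ - (k:ℚ_[p]) * c‖ ≤ (p:ℝ) ^ (n:ℤ) := hξ
        have hkle : ‖(k:ℚ_[p])‖ ≤ 1 := by
          have : ‖((k:ℤ):ℚ_[p])‖ ≤ 1 := Padic.norm_int_le_one k
          exact_mod_cast this
        have hkc : ‖(k:ℚ_[p]) * c‖ ≤ (p:ℝ) ^ ((n:ℤ)+1) := by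
          rw [norm_mul, hcnorm]
          calc ‖(k:ℚ_[p])‖ * (p:ℝ) ^ ((n:ℤ)+1) ≤ 1 * (p:ℝ) ^ ((n:ℤ)+1) :=
                mul_le_mul_of_nonneg_right hkle (zpow_nonneg hp0R.le _)
            _ = (p:ℝ) ^ ((n:ℤ)+1) := one_mul _
        have hultra : ‖ξ‖ ≤ max ‖ξ - (k:ℚ_[p]) * c‖ ‖(k:ℚ_[p]) * c‖ := by
          have := Padic.nonarchimedean (ξ - (k:ℚ_[p]) * c) ((k:ℚ_[p]) * c)
          simpa using this
        refine le_trans hultra (max_le (le_trans hξ' ?_) hkc)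
        exact zpow_le_zpow_right₀ hp1.le (by omega)
    have hdisj : (↑(Finset.range p) : Set ℕ).PairwiseDisjoint C := by
      intro a ha b hb hab
      simp only [Finset.coe_range, Set.mem_Iio] at ha hb
      rw [Function.onFun, Set.disjoint_left]
      intro ξ hξa hξb
      have hξa' : ‖ξ - (a:ℚ_[p]) * c‖ ≤ (p:ℝ) ^ (n:ℤ) := hξa
      have hξb' : ‖ξ - (b:ℚ_[p]) * c‖ ≤ (p:ℝ) ^ (n:ℤ) := hξb
      have hsub : ‖(((a:ℤ) - (b:ℤ) : ℤ):ℚ_[p])‖ * (p:ℝ) ^ ((n:ℤ)+1) ≤ (p:ℝ) ^ (n:ℤ) := by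
        have hid : (((a:ℤ) - (b:ℤ) : ℤ):ℚ_[p]) * c = (ξ - (b:ℚ_[p]) * c) - (ξ - (a:ℚ_[p]) * c) := by
          push_cast
          ring
        have h2 : ‖(((a:ℤ) - (b:ℤ) : ℤ):ℚ_[p]) * c‖ ≤ (p:ℝ) ^ (n:ℤ) := by
          rw [hid]
          have := Padic.nonarchimedean (ξ - (b:ℚ_[p]) * c) (-(ξ - (a:ℚ_[p]) * c))
          simp only [norm_neg] at this
          exact le_trans (by simpa [sub_eq_add_neg] using this) (max_le hξb' hξa')
        rwa [norm_mul, hcnorm] at h2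
      have hlt : ‖(((a:ℤ) - (b:ℤ) : ℤ):ℚ_[p])‖ < 1 := by
        have hpos : (0:ℝ) < (p:ℝ) ^ ((n:ℤ)+1) := zpow_pos hp0R _
        have h3 : ‖(((a:ℤ) - (b:ℤ) : ℤ):ℚ_[p])‖ ≤ (p:ℝ) ^ (n:ℤ) / (p:ℝ) ^ ((n:ℤ)+1) :=
          (le_div_iff₀ hpos).mpr hsub
        have h4 : (p:ℝ) ^ (n:ℤ) / (p:ℝ) ^ ((n:ℤ)+1) = (p:ℝ)⁻¹ := by
          rw [div_eq_iff hpos.ne', ← zpow_neg_one, ← zpow_add₀ hpne]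
          congr 1
          ring
        rw [h4] at h3
        exact lt_of_le_of_lt h3 (by rw [inv_lt_one_iff₀]; right; exact hp1)
      rw [Padic.norm_intCast_lt_one_iff] at hlt
      have habs : |(a:ℤ) - b| < p := by rw [abs_sub_lt_iff]; omega
      have : (a:ℤ) - b = 0 := Int.eq_zero_of_abs_lt_dvd hlt habs
      exact absurd (by omega : a = b) hab
    rw [hcover, measure_biUnion_finset hdisj (fun k _ =>
      (isClosed_le ((continuous_id.sub continuous_const).norm) continuous_const).measurableSet)]
    have hCk : ∀ k, μ (C k) = μ {ξ : ℚ_[p] | ‖ξ‖ ≤ (p:ℝ) ^ (n:ℤ)} := by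
      intro k
      have hset : C k = (fun ξ => ξ + (-((k:ℚ_[p]) * c))) ⁻¹' {ξ : ℚ_[p] | ‖ξ‖ ≤ (p:ℝ) ^ (n:ℤ)} := by
        ext ξ
        simp [hC, sub_eq_add_neg]
      rw [hset, measure_preimage_add_right]
    simp only [hCk, ih, Finset.sum_const, Finset.card_range, nsmul_eq_mul]
    rw [pow_succ]
    ring
end Measure

section Char
variable {p : ℕ} [Fact p.Prime] [MeasurableSpace ℚ_[p]] [BorelSpace ℚ_[p]]

lemma integral_char_ball (μ : Measure ℚ_[p]) [μ.IsAddHaarMeasure]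
    (hμ : μ {x : ℚ_[p] | ‖x‖ ≤ 1} = 1)
    (χ : AddChar ℚ_[p] ℂ)
    (hχ₁ : ∀ x : ℚ_[p], ‖x‖ ≤ 1 → χ x = 1)
    (hχ₂ : ∀ x : ℚ_[p], 1 < ‖x‖ → χ x ≠ 1)
    (x : ℚ_[p]) (hx0 : x ≠ 0) (n : ℕ) :
    ∫ ξ in {ξ : ℚ_[p] | ‖ξ‖ ≤ (p:ℝ) ^ (n:ℤ)}, (χ (-(ξ * x)) : ℂ) ∂μ
      = if ‖x‖ ≤ (p:ℝ) ^ (-(n:ℤ)) then ((p:ℂ) ^ (n:ℕ)) else 0 := by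
  have hp1 : (1:ℝ) < p := one_lt_p
  have hp0R : (0:ℝ) < p := lt_trans one_pos hp1
  have hpne : (p:ℝ) ≠ 0 := hp0R.ne'
  set B : Set ℚ_[p] := {ξ : ℚ_[p] | ‖ξ‖ ≤ (p:ℝ) ^ (n:ℤ)} with hBdef
  by_cases h : ‖x‖ ≤ (p:ℝ) ^ (-(n:ℤ))
  · rw [if_pos h]
    have heq : Set.EqOn (fun ξ : ℚ_[p] => (χ (-(ξ * x)) : ℂ)) (fun _ => (1:ℂ)) B := by
      intro ξ hξ
      have hξn : ‖ξ‖ ≤ (p:ℝ) ^ (n:ℤ) := hξ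
      show (χ (-(ξ * x)) : ℂ) = 1
      apply hχ₁
      rw [norm_neg, norm_mul]
      calc ‖ξ‖ * ‖x‖ ≤ (p:ℝ) ^ (n:ℤ) * (p:ℝ) ^ (-(n:ℤ)) :=
            mul_le_mul hξn h (norm_nonneg _) (zpow_nonneg hp0R.le _)
        _ = 1 := by rw [← zpow_add₀ hpne, add_neg_cancel, zpow_zero]
    rw [setIntegral_congr_fun (ball_measurable _) heq, setIntegral_const, measureReal_def,
      ball_volume μ hμ n]
    simp [ENNReal.toReal_pow, smul_eq_mul]
  · rw [if_neg h]
    set c : ℚ_[p] := (p:ℚ_[p]) ^ (-(n:ℤ)) with hcdef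
    have hcnorm : ‖c‖ = (p:ℝ) ^ (n:ℤ) := by rw [hcdef, norm_p_zpow, neg_neg]
    have hcx : 1 < ‖c * x‖ := by
      rw [norm_mul, hcnorm, Padic.norm_eq_zpow_neg_valuation hx0, ← zpow_add₀ hpne]
      have hvlt : -(n:ℤ) < -x.valuation := by
        rw [← zpow_lt_zpow_iff_right₀ hp1 (m := -(n:ℤ)) (n := -x.valuation)]
        rw [← Padic.norm_eq_zpow_neg_valuation hx0]
        exact lt_of_not_ge h
      calc (1:ℝ) = (p:ℝ) ^ (0:ℤ) := (zpow_zero _).symm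
        _ < (p:ℝ) ^ ((n:ℤ) + -x.valuation) := by
            rw [zpow_lt_zpow_iff_right₀ hp1]
            omega
    have hne : (χ (-(c * x)) : ℂ) ≠ 1 := by
      apply hχ₂
      rwa [norm_neg]
    have hmem_iff : ∀ ξ : ℚ_[p], ξ + c ∈ B ↔ ξ ∈ B := by
      intro ξ
      constructor
      · intro hmem
        have h1 : ‖ξ + c‖ ≤ (p:ℝ) ^ (n:ℤ) := hmem
        show ‖ξ‖ ≤ (p:ℝ) ^ (n:ℤ)
        have hid : ξ = (ξ + c) + -c := by ring
        rw [hid]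
        exact le_trans (Padic.nonarchimedean _ _)
          (max_le h1 (by rw [norm_neg, hcnorm]))
      · intro hmem
        have h1 : ‖ξ‖ ≤ (p:ℝ) ^ (n:ℤ) := hmem
        show ‖ξ + c‖ ≤ (p:ℝ) ^ (n:ℤ)
        exact le_trans (Padic.nonarchimedean _ _) (max_le h1 (le_of_eq hcnorm))
    set g : ℚ_[p] → ℂ := fun ξ => (χ (-(ξ * x)) : ℂ) with hgdef
    have hind : ∀ ξ : ℚ_[p],
        B.indicator g (ξ + c) = B.indicator (fun ξ => g ξ * χ (-(c * x))) ξ := by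
      intro ξ
      by_cases hmem : ξ ∈ B
      · rw [Set.indicator_of_mem hmem, Set.indicator_of_mem ((hmem_iff ξ).mpr hmem)]
        show (χ (-((ξ + c) * x)) : ℂ) = χ (-(ξ * x)) * χ (-(c * x))
        rw [show -((ξ + c) * x) = -(ξ * x) + -(c * x) by ring, AddChar.map_add_eq_mul]
      · rw [Set.indicator_of_notMem hmem,
          Set.indicator_of_notMem (fun hmem' => hmem ((hmem_iff ξ).mp hmem'))]
    have key : (∫ ξ in B, g ξ ∂μ) = (∫ ξ in B, g ξ ∂μ) * χ (-(c * x)) := by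
      calc (∫ ξ in B, g ξ ∂μ) = ∫ ξ, B.indicator g ξ ∂μ :=
            (integral_indicator (ball_measurable _)).symm
        _ = ∫ ξ, B.indicator g (ξ + c) ∂μ := (integral_add_right_eq_self (B.indicator g) c).symm
        _ = ∫ ξ, B.indicator (fun ξ => g ξ * χ (-(c * x))) ξ ∂μ := by
            simp only [hind]
        _ = ∫ ξ in B, g ξ * χ (-(c * x)) ∂μ := integral_indicator (ball_measurable _)
        _ = (∫ ξ in B, g ξ ∂μ) * χ (-(c * x)) := integral_mul_const _ _
    have hzero : (∫ ξ in B, g ξ ∂μ) * ((χ (-(c * x)) : ℂ) - 1) = 0 := by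
      rw [mul_sub, mul_one, ← key, sub_self]
    rcases mul_eq_zero.mp hzero with h1 | h2
    · exact h1
    · exact absurd (by linear_combination h2 : (χ (-(c * x)) : ℂ) = 1) hne

end Char

/-- For a radial, `ℤ_p`-periodic symbol `Ĵ` with `Ĵ(0) = 1` and
`|Ĵ| ≤ 1`, the heat kernel `Z₀(x,t)` — the inverse Fourier transform (as a
distribution, i.e. as the limit of the truncated inverse Fourier integrals) of
`e^{−t(1−Ĵ(|ξ|_p))}` — is given, for `x ∈ ℤ_p \ {0}` and `t > 0`, by the finite
sum `1 + Σ_{j=1}^{1+ord(x)} e^{−t(1−Ĵ(p^j))}(p^j 1_{|x|_p ≤ p^{−j}} −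
p^{j−1} 1_{|x|_p ≤ p^{−(j−1)}})`. -/
theorem heat_kernel_formula
    (p : ℕ) [Fact p.Prime]
    [MeasurableSpace ℚ_[p]] [BorelSpace ℚ_[p]]
    (μ : Measure ℚ_[p]) [μ.IsAddHaarMeasure]
    (hμ : μ {x : ℚ_[p] | ‖x‖ ≤ 1} = 1)
    (χ : AddChar ℚ_[p] ℂ)
    (hχ₁ : ∀ x : ℚ_[p], ‖x‖ ≤ 1 → χ x = 1)
    (hχ₂ : ∀ x : ℚ_[p], 1 < ‖x‖ → χ x ≠ 1)
    (hatJ : ℚ_[p] → ℝ)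
    (hrad : ∀ ξ η : ℚ_[p], ‖ξ‖ = ‖η‖ → hatJ ξ = hatJ η)
    (hper : ∀ ξ ξ₀ : ℚ_[p], ‖ξ₀‖ ≤ 1 → hatJ (ξ + ξ₀) = hatJ ξ)
    (h0 : hatJ 0 = 1)
    (hbd : ∀ ξ, |hatJ ξ| ≤ 1)
    (t : ℝ) (ht : 0 < t)
    (x : ℚ_[p]) (hx : ‖x‖ ≤ 1) (hx0 : x ≠ 0) :
    Tendsto
      (fun m : ℕ =>
        ∫ ξ in {ξ : ℚ_[p] | ‖ξ‖ ≤ (p : ℝ) ^ (m : ℕ)},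
          Complex.exp (-(t : ℂ) * (1 - (hatJ ξ : ℂ))) * χ (-(ξ * x)) ∂μ)
      atTop
      (nhds (1 + ∑ j ∈ Finset.Icc (1 : ℤ) (x.valuation + 1),
        Complex.exp (-(t : ℂ) * (1 - (hatJ ((p : ℚ_[p]) ^ (-j)) : ℂ))) *
          ((if ‖x‖ ≤ (p : ℝ) ^ (-j) then (p : ℂ) ^ j else 0)
            - (if ‖x‖ ≤ (p : ℝ) ^ (-(j - 1)) then (p : ℂ) ^ (j - 1) else 0)))) := by
  have hp1 : (1:ℝ) < p := one_lt_p
  have hp0R : (0:ℝ) < p := lt_trans one_pos hp1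
  have hpne : (p:ℝ) ≠ 0 := hp0R.ne'
  set T : ℤ → ℂ := fun j =>
    Complex.exp (-(t : ℂ) * (1 - (hatJ ((p : ℚ_[p]) ^ (-j)) : ℂ))) *
      ((if ‖x‖ ≤ (p : ℝ) ^ (-j) then (p : ℂ) ^ j else 0)
        - (if ‖x‖ ≤ (p : ℝ) ^ (-(j - 1)) then (p : ℂ) ^ (j - 1) else 0)) with hT
  set f : ℚ_[p] → ℂ := fun ξ => Complex.exp (-(t : ℂ) * (1 - (hatJ ξ : ℂ))) * χ (-(ξ * x))
    with hf
  set B : ℕ → Set ℚ_[p] := fun n => {ξ : ℚ_[p] | ‖ξ‖ ≤ (p:ℝ) ^ (n:ℤ)} with hB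
  -- continuity
  have hJcont : Continuous hatJ := locConst_continuous hatJ (fun a b hab => by
    have h1 := hper b (a - b) hab
    rw [show b + (a - b) = a by ring] at h1
    exact h1)
  have hχcont : Continuous fun y : ℚ_[p] => (χ y : ℂ) := locConst_continuous _ (fun a b hab => by
    have h1 : (χ (a - b) : ℂ) = 1 := hχ₁ _ hab
    have h2 : (χ (b + (a - b)) : ℂ) = χ b * χ (a - b) := AddChar.map_add_eq_mul χ b (a - b)
    rw [show b + (a - b) = a by ring, h1, mul_one] at h2
    exact h2)
  have hgc : Continuous fun ξ : ℚ_[p] => (χ (-(ξ * x)) : ℂ) :=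
    hχcont.comp ((continuous_id.mul continuous_const).neg)
  have hfc : Continuous f := by
    rw [hf]
    exact ((Complex.continuous_exp.comp (continuous_const.mul
      (continuous_const.sub (Complex.continuous_ofReal.comp hJcont))))).mul hgc
  have hcompact : ∀ n : ℕ, IsCompact (B n) := fun n => by
    show IsCompact {ξ : ℚ_[p] | ‖ξ‖ ≤ (p:ℝ) ^ ((n:ℕ):ℤ)}
    rw [ball_eq_closedBall]
    exact isCompact_closedBall _ _
  have hint : ∀ n, IntegrableOn f (B n) μ :=
    fun n => hfc.continuousOn.integrableOn_compact (hcompact n)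
  have hgint : ∀ n, IntegrableOn (fun ξ : ℚ_[p] => (χ (-(ξ * x)) : ℂ)) (B n) μ :=
    fun n => hgc.continuousOn.integrableOn_compact (hcompact n)
  have hchar : ∀ n : ℕ, ∫ ξ in B n, (χ (-(ξ * x)) : ℂ) ∂μ
      = if ‖x‖ ≤ (p:ℝ) ^ (-(n:ℤ)) then ((p:ℂ) ^ (n:ℕ)) else 0 :=
    fun n => integral_char_ball μ hμ χ hχ₁ hχ₂ x hx0 n
  have hxnorm : ‖x‖ = (p:ℝ) ^ (-x.valuation) := Padic.norm_eq_zpow_neg_valuation hx0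
  have hv0 : 0 ≤ x.valuation := (Padic.norm_le_one_iff_val_nonneg x).mp hx
  -- main induction
  have key : ∀ m : ℕ, ∫ ξ in B m, f ξ ∂μ = 1 + ∑ j ∈ Finset.Icc (1:ℤ) (m:ℤ), T j := by
    intro m
    induction m with
    | zero =>
      rw [Nat.cast_zero, Finset.Icc_eq_empty (by norm_num), Finset.sum_empty, add_zero]
      have heq : Set.EqOn f (fun _ => (1:ℂ)) (B 0) := by
        intro ξ hξ
        have hξ1 : ‖ξ‖ ≤ 1 := by
          have : ‖ξ‖ ≤ (p:ℝ) ^ ((0:ℕ):ℤ) := hξ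
          simpa using this
        have hJ : hatJ ξ = 1 := by
          have h1 := hper 0 ξ hξ1
          rwa [zero_add, h0] at h1
        have hχval : (χ (-(ξ * x)) : ℂ) = 1 := by
          apply hχ₁
          rw [norm_neg, norm_mul]
          calc ‖ξ‖ * ‖x‖ ≤ 1 * 1 := mul_le_mul hξ1 hx (norm_nonneg _) one_pos.le
            _ = 1 := one_mul 1
        show Complex.exp (-(t : ℂ) * (1 - (hatJ ξ : ℂ))) * χ (-(ξ * x)) = 1
        rw [hJ, hχval]
        simp
      rw [setIntegral_congr_fun (ball_measurable _) heq, setIntegral_const, measureReal_def,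
        ball_volume μ hμ 0]
      simp
    | succ m ih =>
      have hsubset : B m ⊆ B (m+1) := fun ξ hξ =>
        le_trans hξ (zpow_le_zpow_right₀ hp1.le (by push_cast; omega))
      have hunion : B m ∪ (B (m+1) \ B m) = B (m+1) := Set.union_diff_cancel hsubset
      have hmeasdiff : MeasurableSet (B (m+1) \ B m) :=
        (ball_measurable _).diff (ball_measurable _)
      rw [← hunion, setIntegral_union disjoint_sdiff_self_right hmeasdiff (hint m)
        ((hint (m+1)).mono_set Set.diff_subset), ih]
      -- the exponential is constant on the annulus
      have hnorm_on : ∀ ξ ∈ B (m+1) \ B m, ‖ξ‖ = (p:ℝ) ^ ((m:ℤ)+1) := by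
        rintro ξ ⟨h1, h2⟩
        have hξ0 : ξ ≠ 0 := by
          rintro rfl
          exact h2 (by
            show ‖(0:ℚ_[p])‖ ≤ (p:ℝ) ^ ((m:ℕ):ℤ)
            rw [norm_zero]
            exact zpow_nonneg hp0R.le _)
        have hval : ‖ξ‖ = (p:ℝ) ^ (-ξ.valuation) := Padic.norm_eq_zpow_neg_valuation hξ0
        have h1' : ‖ξ‖ ≤ (p:ℝ) ^ (((m+1:ℕ)):ℤ) := h1
        have h2' : ¬ ‖ξ‖ ≤ (p:ℝ) ^ ((m:ℕ):ℤ) := h2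
        rw [hval] at h1' h2' ⊢
        rw [zpow_le_zpow_iff_right₀ hp1] at h1'
        rw [not_le, zpow_lt_zpow_iff_right₀ hp1] at h2'
        congr 1
        push_cast at h1' ⊢
        omega
      have heqdiff : Set.EqOn f (fun ξ =>
          Complex.exp (-(t : ℂ) * (1 - (hatJ ((p : ℚ_[p]) ^ (-((m:ℤ)+1))) : ℂ))) *
            χ (-(ξ * x))) (B (m+1) \ B m) := by
        intro ξ hξ
        have hJeq : hatJ ξ = hatJ ((p : ℚ_[p]) ^ (-((m:ℤ)+1))) := by
          apply hrad
          rw [hnorm_on ξ hξ, norm_p_zpow, neg_neg]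
        show Complex.exp (-(t : ℂ) * (1 - (hatJ ξ : ℂ))) * χ (-(ξ * x)) = _ * χ (-(ξ * x))
        rw [hJeq]
      have hsplit : ∫ ξ in B (m+1), (χ (-(ξ * x)) : ℂ) ∂μ
          = (∫ ξ in B m, (χ (-(ξ * x)) : ℂ) ∂μ) + ∫ ξ in B (m+1) \ B m, (χ (-(ξ * x)) : ℂ) ∂μ := by
        rw [← hunion, setIntegral_union disjoint_sdiff_self_right hmeasdiff (hgint m)
          ((hgint (m+1)).mono_set Set.diff_subset), hunion]
      have hdiff_eq : ∫ ξ in B (m+1) \ B m, f ξ ∂μ = T ((m:ℤ)+1) := by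
        rw [setIntegral_congr_fun hmeasdiff heqdiff, integral_const_mul]
        have hannulus : ∫ ξ in B (m+1) \ B m, (χ (-(ξ * x)) : ℂ) ∂μ
            = (if ‖x‖ ≤ (p:ℝ) ^ (-((m+1:ℕ):ℤ)) then ((p:ℂ) ^ (m+1:ℕ)) else 0)
              - (if ‖x‖ ≤ (p:ℝ) ^ (-((m:ℕ):ℤ)) then ((p:ℂ) ^ (m:ℕ)) else 0) := by
          have h3 : ∫ ξ in B (m+1) \ B m, (χ (-(ξ * x)) : ℂ) ∂μ
              = (∫ ξ in B (m+1), (χ (-(ξ * x)) : ℂ) ∂μ)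
                - ∫ ξ in B m, (χ (-(ξ * x)) : ℂ) ∂μ := by
            rw [hsplit]; ring
          rw [h3, hchar (m+1), hchar m]
        rw [hannulus]
        simp only [hT]
        rw [show ((m:ℤ)+1-1) = ((m:ℕ):ℤ) from by ring,
          show ((m:ℤ)+1) = ((m+1:ℕ):ℤ) from by push_cast; ring,
          zpow_natCast, zpow_natCast]
      rw [hdiff_eq]
      have hsum : ∑ j ∈ Finset.Icc (1:ℤ) (((m+1:ℕ)):ℤ), T j
          = (∑ j ∈ Finset.Icc (1:ℤ) ((m:ℕ):ℤ), T j) + T ((m:ℤ)+1) := by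
        rw [show (((m+1:ℕ)):ℤ) = ((m:ℤ)+1) by push_cast; ring,
          show Finset.Icc (1:ℤ) ((m:ℤ)+1) = insert ((m:ℤ)+1) (Finset.Icc (1:ℤ) (m:ℤ)) by
            ext k; simp only [Finset.mem_insert, Finset.mem_Icc]; omega,
          Finset.sum_insert (by simp), add_comm]
      rw [hsum]
      ring
  -- pass to the limit: the sequence is eventually constant
  apply tendsto_atTop_of_eventually_const (i₀ := (x.valuation + 1).toNat)
  intro m hm
  have hm' : x.valuation + 1 ≤ (m:ℤ) := Int.toNat_le.mp hm
  have hsetm : {ξ : ℚ_[p] | ‖ξ‖ ≤ (p : ℝ) ^ (m : ℕ)} = B m := by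
    rw [hB]
    ext ξ
    simp [zpow_natCast]
  show ∫ ξ in {ξ : ℚ_[p] | ‖ξ‖ ≤ (p : ℝ) ^ (m : ℕ)}, f ξ ∂μ = _
  rw [hsetm, key m]
  congr 1
  refine (Finset.sum_subset (Finset.Icc_subset_Icc_right hm') ?_).symm
  intro j hj hj'
  simp only [Finset.mem_Icc] at hj hj'
  have hcond : ∀ k : ℤ, x.valuation < k → ¬ (‖x‖ ≤ (p:ℝ) ^ (-k)) := by
    intro k hk
    rw [hxnorm, zpow_le_zpow_iff_right₀ hp1, not_le]
    omega
  simp only [hT]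
  rw [if_neg (hcond j (by omega)), if_neg (hcond (j-1) (by omega))]
  ring
end
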